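/- arXiv:1702.04206 — 3 statements merged into one kernel-verified Lean document; each statement's English description precedes it below -/
import Mathlib

section
/- Let M ∈ rep(C_r) be an indecomposable representation of the universal covering quiver C_r of Γ_r (r ≥ 3) and set N := π_λ(M). Then the following are equivalent: (a) N has the equal kernels property; (b) N(γ_i) is injective for all i ∈ {1,…,r}; (c) M ∈ Inj, i.e. M(δ) is injective for every arrow δ of C_r. -/
open DirectSum

/-!
# Shared framework

Concrete finite-dimensional representations of the generalized Kronecker quiver `Γ_r`
(`KRep`) and of its universal covering quiver `C_r` (an `r`-regular tree with bipartite
orientation, `CrQuiver`/`CrRep`), together with an abstract layer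
(`KroneckerAR`, `CoverAR`) for the Auslander–Reiten-theoretic notions
(AR translate, components, quasi-simplicity, quasi-length, preprojective/preinjective
representations) that are not available in Mathlib.
-/

/-! ## Representations of the generalized Kronecker quiver `Γ_r` -/

/-- A finite-dimensional representation of the `r`-Kronecker quiver `Γ_r`
(two vertices `1, 2` and `r` arrows `γ_1, …, γ_r : 1 → 2`) over `k`. -/
structure KRep (k : Type) [Field k] (r : ℕ) where
  V1 : Type
  V2 : Type
  [a1 : AddCommGroup V1]
  [a2 : AddCommGroup V2]
  [m1 : Module k V1]
  [m2 : Module k V2]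
  [f1 : FiniteDimensional k V1]
  [f2 : FiniteDimensional k V2]
  map : Fin r → V1 →ₗ[k] V2

attribute [instance] KRep.a1 KRep.a2 KRep.m1 KRep.m2 KRep.f1 KRep.f2

namespace KRep

variable {k : Type} [Field k] {r : ℕ}

/-- Morphisms of representations of `Γ_r`. -/
structure Hom (M N : KRep k r) where
  f1 : M.V1 →ₗ[k] N.V1
  f2 : M.V2 →ₗ[k] N.V2
  comm : ∀ i, (N.map i).comp f1 = f2.comp (M.map i)

/-- Isomorphisms of representations of `Γ_r`. -/
structure Iso (M N : KRep k r) where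
  e1 : M.V1 ≃ₗ[k] N.V1
  e2 : M.V2 ≃ₗ[k] N.V2
  comm : ∀ i, (N.map i).comp (e1 : M.V1 →ₗ[k] N.V1) = (e2 : M.V2 →ₗ[k] N.V2).comp (M.map i)

/-- `M` is indecomposable: it is nonzero and its endomorphism ring has no nontrivial
idempotents. -/
def Indec (M : KRep k r) : Prop :=
  ((∃ v : M.V1, v ≠ 0) ∨ (∃ v : M.V2, v ≠ 0)) ∧
  ∀ f : Hom M M, f.f1.comp f.f1 = f.f1 → f.f2.comp f.f2 = f.f2 →
    (f.f1 = 0 ∧ f.f2 = 0) ∨ (f.f1 = LinearMap.id ∧ f.f2 = LinearMap.id)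

/-- `rad(M, N) ≠ 0`: there is a nonzero non-invertible homomorphism `M → N`. -/
def radNe (M N : KRep k r) : Prop :=
  ∃ f : Hom M N, (f.f1 ≠ 0 ∨ f.f2 ≠ 0) ∧
    ¬ (Function.Bijective f.f1 ∧ Function.Bijective f.f2)

/-- The equal kernels property: `M^α = Σ α_i M(γ_i)` is injective for all `α ≠ 0`. -/
def EKP (M : KRep k r) : Prop :=
  ∀ α : Fin r → k, α ≠ 0 → Function.Injective ⇑(∑ i, α i • M.map i)

/-- The equal images property: `M^α = Σ α_i M(γ_i)` is surjective for all `α ≠ 0`. -/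
def EIP (M : KRep k r) : Prop :=
  ∀ α : Fin r → k, α ≠ 0 → Function.Surjective ⇑(∑ i, α i • M.map i)

/-- The dimension vector `(dim_k M_1, dim_k M_2)`. -/
noncomputable def dimVec (M : KRep k r) : ℕ × ℕ := (Module.finrank k M.V1, Module.finrank k M.V2)

/-- The standard duality `D` on `rep(Γ_r)`:
`(DM)_1 = (M_2)^*`, `(DM)_2 = (M_1)^*`, `(DM)(γ_i) = M(γ_i)^*`. -/
noncomputable def dual (M : KRep k r) : KRep k r where
  V1 := Module.Dual k M.V2
  V2 := Module.Dual k M.V1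
  map i := (M.map i).dualMap

/-- The action of an `r × r`-matrix `A` on a representation, corresponding to the pullback
along the algebra homomorphism `φ_A` with `φ_A(γ_j) = Σ_i a_{ij} γ_i`. -/
def glAct (M : KRep k r) (A : Matrix (Fin r) (Fin r) k) : KRep k r where
  V1 := M.V1
  V2 := M.V2
  map j := ∑ i, A i j • M.map i

/-- `M` is `GL_r(k)`-stable: `A.M ≅ M` for every `A ∈ GL_r(k)`, where `A.M` is the pullback
of `M` along `φ_{A⁻¹}`. -/
def GLStable (M : KRep k r) : Prop :=
  ∀ A : GL (Fin r) k,
    Nonempty (Iso (M.glAct ((A⁻¹ : GL (Fin r) k) : Matrix (Fin r) (Fin r) k)) M)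

end KRep

/-! ## Abstract Auslander–Reiten data for `rep(Γ_r)` -/

/-- Abstract Auslander–Reiten-theoretic data for the generalized Kronecker algebra
`K_r = kΓ_r`: the AR translate `τ` (a bijection on regular indecomposables, here recorded
as a permutation of all representations), the classes of preprojective and preinjective
representations, the relation of lying in the same AR component, and quasi-simplicity. -/
structure KroneckerAR (k : Type) [Field k] (r : ℕ) where
  /-- The Auslander–Reiten translate `τ`. -/
  tau : Equiv.Perm (KRep k r)
  /-- `M` lies in the preprojective component `𝒫`. -/
  Preproj : KRep k r → Prop
  /-- `M` lies in one of the preinjective component `ℐ`. -/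
  Preinj : KRep k r → Prop
  /-- `M`, `N` lie in the same component of the AR quiver. -/
  sameComp : KRep k r → KRep k r → Prop
  sameComp_equiv : Equivalence sameComp
  sameComp_tau : ∀ M, sameComp M (tau M)
  /-- `M` is quasi-simple (lies in the bottom layer of a `ℤA∞` component). -/
  quasiSimple : KRep k r → Prop

namespace KroneckerAR

variable {k : Type} [Field k] {r : ℕ}

/-- `M` is regular: neither preprojective nor preinjective. -/
def Regular (S : KroneckerAR k r) (M : KRep k r) : Prop := ¬ S.Preproj M ∧ ¬ S.Preinj M

/-- The regular component containing `X` has width `W(𝒞) = w`: there are quasi-simple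
representations `M_𝒞` and `W_𝒞` in the component of `X` such that the `τ⁻¹`-orbit of `M_𝒞`
consists of `EKP`-representations, `τ M_𝒞 ∉ EKP` (so the cone `(M_𝒞 →)` is `EKP ∩ 𝒞`),
dually the `τ`-orbit of `W_𝒞` consists of `EIP`-representations with `τ⁻¹ W_𝒞 ∉ EIP`
(so `(→ W_𝒞) = EIP ∩ 𝒞`), and `τ^{w+1} M_𝒞 = W_𝒞`. -/
def IsWidth (S : KroneckerAR k r) (X : KRep k r) (w : ℕ) : Prop :=
  ∃ MC WC : KRep k r, S.quasiSimple MC ∧ S.quasiSimple WC ∧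
    S.sameComp X MC ∧ S.sameComp X WC ∧
    (∀ j : ℕ, ((S.tau⁻¹ ^ j) MC).EKP) ∧ ¬ (S.tau MC).EKP ∧
    (∀ j : ℕ, ((S.tau ^ j) WC).EIP) ∧ ¬ (S.tau⁻¹ WC).EIP ∧
    (S.tau ^ (w + 1)) MC = WC

end KroneckerAR
/-! ## The universal covering quiver `C_r` -/

/-- The combinatorial data of a quiver whose underlying graph is `r`-regular and which has
bipartite orientation: a set `Src` of sources, a set `Snk` of sinks, and for each source
(resp. sink) exactly one incident arrow with label (`π`-image) `γ_i` for every `i`;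
`step x i` is the target of the arrow labelled `i` starting at `x`, and `back y i` is the
source of the arrow labelled `i` ending at `y`. -/
structure BipData (r : ℕ) where
  Src : Type
  Snk : Type
  step : Src → Fin r → Snk
  back : Snk → Fin r → Src
  step_back : ∀ y i, step (back y i) i = y
  back_step : ∀ x i, back (step x i) i = x
  step_inj : ∀ x, Function.Injective (step x)
  back_inj : ∀ y, Function.Injective (back y)

/-- The underlying (simple) graph of the quiver. -/
def BipData.graph {r : ℕ} (Q : BipData r) : SimpleGraph (Q.Src ⊕ Q.Snk) where
  Adj a b := (∃ x i, a = Sum.inl x ∧ b = Sum.inr (Q.step x i)) ∨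
             (∃ x i, b = Sum.inl x ∧ a = Sum.inr (Q.step x i))
  symm := by
    constructor
    rintro a b (⟨x, i, h1, h2⟩ | ⟨x, i, h1, h2⟩)
    · exact Or.inr ⟨x, i, h1, h2⟩
    · exact Or.inl ⟨x, i, h1, h2⟩
  loopless := by
    constructor
    rintro a (⟨x, i, h1, h2⟩ | ⟨x, i, h1, h2⟩) <;> (subst h1; simp at h2)

/-- The universal covering quiver `C_r` of `Γ_r`: an `r`-regular tree with bipartite
orientation. -/
structure CrQuiver (r : ℕ) extends BipData r where
  isTree : toBipData.graph.IsTree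

/-! ## Representations of `C_r` -/

/-- A finite-dimensional representation of `C_r` over `k` (finitely supported). -/
structure CrRep (k : Type) [Field k] {r : ℕ} (Q : CrQuiver r) where
  Vs : Q.Src → Type
  Vt : Q.Snk → Type
  [acs : ∀ x, AddCommGroup (Vs x)]
  [mds : ∀ x, Module k (Vs x)]
  [act : ∀ y, AddCommGroup (Vt y)]
  [mdt : ∀ y, Module k (Vt y)]
  [fds : ∀ x, FiniteDimensional k (Vs x)]
  [fdt : ∀ y, FiniteDimensional k (Vt y)]
  map : ∀ (x : Q.Src) (i : Fin r), Vs x →ₗ[k] Vt (Q.step x i)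
  finSupp : {z : Q.Src ⊕ Q.Snk |
      Sum.elim (fun x => ∃ v : Vs x, v ≠ 0) (fun y => ∃ v : Vt y, v ≠ 0) z}.Finite

attribute [instance] CrRep.acs CrRep.mds CrRep.act CrRep.mdt CrRep.fds CrRep.fdt

namespace CrRep

variable {k : Type} [Field k] {r : ℕ} {Q : CrQuiver r}

/-- The support of `M`. -/
def suppSet (M : CrRep k Q) : Set (Q.Src ⊕ Q.Snk) :=
  {z | Sum.elim (fun x => ∃ v : M.Vs x, v ≠ 0) (fun y => ∃ v : M.Vt y, v ≠ 0) z}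

/-- `z` belongs to `T(M)`, the minimal subtree of `C_r` containing the support of `M`:
it lies on a path between two support vertices. -/
def inTree (M : CrRep k Q) (z : Q.Src ⊕ Q.Snk) : Prop :=
  ∃ a ∈ M.suppSet, ∃ b ∈ M.suppSet, ∃ p : Q.toBipData.graph.Walk a b,
    p.IsPath ∧ z ∈ p.support

/-- `z` is a leaf of `M`: a vertex of `T(M)` with at most one neighbour in `T(M)`. -/
def IsLeaf (M : CrRep k Q) (z : Q.Src ⊕ Q.Snk) : Prop :=
  M.inTree z ∧ {w | Q.toBipData.graph.Adj z w ∧ M.inTree w}.Subsingleton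

/-- The dimension of `M` at a vertex. -/
noncomputable def dimAt (M : CrRep k Q) (z : Q.Src ⊕ Q.Snk) : ℕ :=
  Sum.elim (fun x => Module.finrank k (M.Vs x)) (fun y => Module.finrank k (M.Vt y)) z

/-- All structure maps of `M` are injective (the class `Inj`). -/
def AllInj (M : CrRep k Q) : Prop := ∀ x i, Function.Injective ⇑(M.map x i)

/-- All structure maps of `M` are surjective (the class `Sur`). -/
def AllSur (M : CrRep k Q) : Prop := ∀ x i, Function.Surjective ⇑(M.map x i)

end CrRep

/-- Morphisms of representations of `C_r`. -/
structure CrHom {k : Type} [Field k] {r : ℕ} {Q : CrQuiver r} (M N : CrRep k Q) where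
  fs : ∀ x, M.Vs x →ₗ[k] N.Vs x
  ft : ∀ y, M.Vt y →ₗ[k] N.Vt y
  comm : ∀ x i, (ft (Q.step x i)).comp (M.map x i) = (N.map x i).comp (fs x)

/-- A morphism is zero if all its components vanish. -/
def CrHom.IsZero {k : Type} [Field k] {r : ℕ} {Q : CrQuiver r} {M N : CrRep k Q}
    (f : CrHom M N) : Prop :=
  (∀ x, f.fs x = 0) ∧ (∀ y, f.ft y = 0)

/-- Isomorphisms of representations of `C_r`. -/
structure CrIso {k : Type} [Field k] {r : ℕ} {Q : CrQuiver r} (M N : CrRep k Q) where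
  es : ∀ x, M.Vs x ≃ₗ[k] N.Vs x
  et : ∀ y, M.Vt y ≃ₗ[k] N.Vt y
  comm : ∀ x i, ((et (Q.step x i) : M.Vt (Q.step x i) →ₗ[k] N.Vt (Q.step x i))).comp (M.map x i)
      = (N.map x i).comp (es x : M.Vs x →ₗ[k] N.Vs x)

namespace CrRep

variable {k : Type} [Field k] {r : ℕ} {Q : CrQuiver r}

/-- `M` is indecomposable: it is nonzero and its endomorphism ring has no nontrivial
idempotents. -/
def Indec (M : CrRep k Q) : Prop :=
  M.suppSet.Nonempty ∧
  ∀ f : CrHom M M, (∀ x, (f.fs x).comp (f.fs x) = f.fs x) →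
    (∀ y, (f.ft y).comp (f.ft y) = f.ft y) →
    f.IsZero ∨ ((∀ x, f.fs x = LinearMap.id) ∧ (∀ y, f.ft y = LinearMap.id))

/-- `M` is balanced: indecomposable with a leaf in `C_r^+` (sources) and a leaf in
`C_r^-` (sinks). -/
def Balanced (M : CrRep k Q) : Prop :=
  M.Indec ∧ (∃ x : Q.Src, M.IsLeaf (Sum.inl x)) ∧ (∃ y : Q.Snk, M.IsLeaf (Sum.inr y))

end CrRep
/-! ## The push-down functor `π_λ : rep(C_r) → rep(Γ_r)` -/

theorem finiteDimensional_directSum {k : Type} [Field k] {ι : Type} (V : ι → Type)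
    [∀ i, AddCommGroup (V i)] [∀ i, Module k (V i)] [∀ i, FiniteDimensional k (V i)]
    (h : {i : ι | ∃ v : V i, v ≠ 0}.Finite) : FiniteDimensional k (⨁ i, V i) := by
  classical
  set s : Finset ι := h.toFinset with hs
  let g : (⨁ i : {j // j ∈ s}, V i.1) →ₗ[k] ⨁ i, V i :=
    DirectSum.toModule k {j // j ∈ s} (⨁ i, V i) fun i => DirectSum.lof k ι V i.1
  have hfd : FiniteDimensional k (⨁ i : {j // j ∈ s}, V i.1) := by
    have e := DirectSum.linearEquivFunOnFintype k {j // j ∈ s} (fun i : {j // j ∈ s} => V i.1)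
    exact Module.Finite.equiv e.symm
  have hsurj : Function.Surjective g := by
    intro m
    induction m using DirectSum.induction_on with
    | zero => exact ⟨0, map_zero g⟩
    | of i x =>
      by_cases hi : i ∈ s
      · refine ⟨DirectSum.lof k {j // j ∈ s} (fun j : {j // j ∈ s} => V j.1) ⟨i, hi⟩ x, ?_⟩
        simp only [g, DirectSum.toModule_lof]
        rw [DirectSum.lof_eq_of]
      · have hx : x = 0 := by
          by_contra hx
          exact hi (by simpa [hs] using ⟨x, hx⟩)
        exact ⟨0, by simp [hx]⟩
    | add a b ha hb =>
      obtain ⟨a', ha'⟩ := ha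
      obtain ⟨b', hb'⟩ := hb
      exact ⟨a' + b', by simp [ha', hb']⟩
  exact Module.Finite.of_surjective g hsurj

namespace CrRep

variable {k : Type} [Field k] {r : ℕ} {Q : CrQuiver r}

/-- The structure map `π_λ(M)(γ_i) = ⊕_{π(β) = γ_i} M(β)` of the push-down. -/
noncomputable def pushMap (M : CrRep k Q) (i : Fin r) :
    (⨁ x, M.Vs x) →ₗ[k] (⨁ y, M.Vt y) := by
  classical
  exact DirectSum.toModule k Q.Src (⨁ y, M.Vt y) fun x =>
    (DirectSum.lof k Q.Snk (fun y => M.Vt y) (Q.step x i)).comp (M.map x i)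

/-- The push-down `π_λ(M)` of a representation of `C_r` along the Galois covering
`π : C_r → Γ_r`. -/
noncomputable def pushdown (M : CrRep k Q) : KRep k r where
  V1 := ⨁ x, M.Vs x
  V2 := ⨁ y, M.Vt y
  f1 := finiteDimensional_directSum (fun x => M.Vs x)
    (M.finSupp.preimage (Set.injOn_of_injective Sum.inl_injective))
  f2 := finiteDimensional_directSum (fun y => M.Vt y)
    (M.finSupp.preimage (Set.injOn_of_injective Sum.inr_injective))
  map := M.pushMap

end CrRep
/-! ## Automorphisms of `C_r` and the actions of `G = π(Γ_r)` and of `S_r` -/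

/-- A quiver automorphism of `C_r` lying over the permutation `σ` of the arrow labels
`γ_1, …, γ_r` of `Γ_r`.  For `σ = 1` these are exactly the deck transformations, i.e.
the elements of the Galois group `G = π(Γ_r)`. -/
structure CrPermAut {r : ℕ} (Q : CrQuiver r) (σ : Equiv.Perm (Fin r)) where
  es : Q.Src ≃ Q.Src
  et : Q.Snk ≃ Q.Snk
  comm : ∀ x i, Q.step (es x) (σ i) = et (Q.step x i)

/-- An element of the Galois group `G = π(Γ_r)`, acting on `C_r` as a label-preserving
quiver automorphism. -/
abbrev CrAut {r : ℕ} (Q : CrQuiver r) := CrPermAut Q (1 : Equiv.Perm (Fin r))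

/-- The induced permutation of the vertex set. -/
def CrPermAut.onV {r : ℕ} {Q : CrQuiver r} {σ : Equiv.Perm (Fin r)} (φ : CrPermAut Q σ) :
    (Q.Src ⊕ Q.Snk) ≃ (Q.Src ⊕ Q.Snk) :=
  Equiv.sumCongr φ.es φ.et

namespace CrRep

variable {k : Type} [Field k] {r : ℕ} {Q : CrQuiver r}

/-- The twist `σ(M)^g` of a representation by an automorphism `φ` of `C_r` lying over
`σ`:  `(M^φ)_x = M_{φ(x)}` and `(M^φ)(α) = M(φ(α))`.  For `σ = 1` this is the shift
`M ↦ M^g` by an element `g` of the Galois group `G`. -/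
noncomputable def twist (M : CrRep k Q) {σ : Equiv.Perm (Fin r)} (φ : CrPermAut Q σ) :
    CrRep k Q where
  Vs x := M.Vs (φ.es x)
  Vt y := M.Vt (φ.et y)
  acs := fun x => inferInstance
  mds := fun x => inferInstance
  act := fun y => inferInstance
  mdt := fun y => inferInstance
  fds := fun x => inferInstance
  fdt := fun y => inferInstance
  map x i := by
    show M.Vs (φ.es x) →ₗ[k] M.Vt (φ.et (Q.step x i))
    rw [← φ.comm x i]
    exact M.map (φ.es x) (σ i)
  finSupp := by
    have h := M.finSupp.preimage (Set.injOn_of_injective φ.onV.injective)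
    convert h using 1
    ext z
    cases z <;> rfl

/-- The shift `M ↦ M^g` of a representation by an element of the Galois group. -/
noncomputable def shift (M : CrRep k Q) (g : CrAut Q) : CrRep k Q := M.twist g

end CrRep
/-! ## Leaf-connected pairs and the extension `N ∗_f M` -/

/-- `(N, M)` is leaf-connected with connecting arrow `α : x0 → Q.step x0 i0`:
`x0` is a leaf of `M`, the target of `α` is a leaf of `N` and the supports are disjoint. -/
def LeafConnected {k : Type} [Field k] {r : ℕ} {Q : CrQuiver r} (N M : CrRep k Q)
    (x0 : Q.Src) (i0 : Fin r) : Prop :=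
  M.IsLeaf (Sum.inl x0) ∧ N.IsLeaf (Sum.inr (Q.step x0 i0)) ∧
  M.suppSet ∩ N.suppSet = ∅

namespace CrRep

variable {k : Type} [Field k] {r : ℕ} {Q : CrQuiver r}

/-- The auxiliary "correction" map used to define `N ∗_f M`: it equals
`(m, n) ↦ (0, f m)` along the connecting arrow and `0` along every other arrow. -/
noncomputable def starCorr (N M : CrRep k Q) (x0 : Q.Src) (i0 : Fin r)
    (f : M.Vs x0 →ₗ[k] N.Vt (Q.step x0 i0)) (x : Q.Src) (i : Fin r) :
    (M.Vs x × N.Vs x) →ₗ[k] (M.Vt (Q.step x i) × N.Vt (Q.step x i)) := by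
  classical
  by_cases h : x = x0 ∧ i = i0
  · obtain ⟨h1, h2⟩ := h
    subst h1; subst h2
    exact (LinearMap.inr k (M.Vt (Q.step x i)) (N.Vt (Q.step x i))).comp
      (f.comp (LinearMap.fst k (M.Vs x) (N.Vs x)))
  · exact 0

/-- The extension `N ∗_f M` of `M` by `N` along a connecting map `f`:
it restricts to `M` on `supp M`, to `N` on `supp N`, and has the map `f` along the
connecting arrow. -/
noncomputable def star (N M : CrRep k Q) (x0 : Q.Src) (i0 : Fin r)
    (f : M.Vs x0 →ₗ[k] N.Vt (Q.step x0 i0)) : CrRep k Q where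
  Vs x := M.Vs x × N.Vs x
  Vt y := M.Vt y × N.Vt y
  acs := fun x => inferInstance
  mds := fun x => inferInstance
  act := fun y => inferInstance
  mdt := fun y => inferInstance
  fds := fun x => inferInstance
  fdt := fun y => inferInstance
  map x i := (M.map x i).prodMap (N.map x i) + starCorr N M x0 i0 f x i
  finSupp := by
    refine (M.finSupp.union N.finSupp).subset ?_
    rintro (x | y) hz
    · obtain ⟨v, hv⟩ := hz
      by_cases h1 : v.1 = 0
      · have h2 : v.2 ≠ 0 := fun h2 => hv (Prod.ext h1 h2)
        exact Or.inr ⟨v.2, h2⟩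
      · exact Or.inl ⟨v.1, h1⟩
    · obtain ⟨v, hv⟩ := hz
      by_cases h1 : v.1 = 0
      · have h2 : v.2 ≠ 0 := fun h2 => hv (Prod.ext h1 h2)
        exact Or.inr ⟨v.2, h2⟩
      · exact Or.inl ⟨v.1, h1⟩

end CrRep

/-! ## Small trees, and the representations `X^i` -/

namespace CrRep

variable {k : Type} [Field k] {r : ℕ} {Q : CrQuiver r}

/-- The tree `T(L)` of `L` is small: it has leaves among the sources and among the sinks,
every vertex has at most `3` neighbours in the tree, and two distinct vertices with
exactly `3` neighbours in the tree have distance at least `3`. -/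
def SmallTree (L : CrRep k Q) : Prop :=
  (∃ x : Q.Src, L.IsLeaf (Sum.inl x)) ∧ (∃ y : Q.Snk, L.IsLeaf (Sum.inr y)) ∧
  (∀ z, L.inTree z → {w | Q.toBipData.graph.Adj z w ∧ L.inTree w}.ncard ≤ 3) ∧
  (∀ z w, L.inTree z → L.inTree w →
    {u | Q.toBipData.graph.Adj z u ∧ L.inTree u}.ncard = 3 →
    {u | Q.toBipData.graph.Adj w u ∧ L.inTree u}.ncard = 3 →
    z = w ∨ 3 ≤ Q.toBipData.graph.dist z w)

/-- `X` is (isomorphic to) the representation `X^i` based at the source `x0`: it is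
indecomposable, one-dimensional at `x0` and at the vertices `t(β_j)`, `j ≠ i`,
zero elsewhere, with isomorphisms along all arrows `β_j`, `j ≠ i`. -/
def IsXi (x0 : Q.Src) (i : Fin r) (X : CrRep k Q) : Prop :=
  X.Indec ∧
  (∀ x : Q.Src, (∃ v : X.Vs x, v ≠ 0) ↔ x = x0) ∧
  (∀ y : Q.Snk, (∃ v : X.Vt y, v ≠ 0) ↔ ∃ j : Fin r, j ≠ i ∧ y = Q.step x0 j) ∧
  Module.finrank k (X.Vs x0) = 1 ∧
  (∀ j : Fin r, j ≠ i → Function.Bijective ⇑(X.map x0 j))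

/-- `M` is `S_r`-stable with respect to the choice `Φ` of automorphisms of `C_r` lying
over the permutations `σ ∈ S_r` of the arrows of `Γ_r`: `M ≅ σ(M)^{g_σ}` for all `σ`. -/
def SrStable (M : CrRep k Q) (Φ : ∀ σ : Equiv.Perm (Fin r), CrPermAut Q σ) : Prop :=
  ∀ σ : Equiv.Perm (Fin r), Nonempty (CrIso M (M.twist (Φ σ)))

end CrRep

/-! ## Abstract Auslander–Reiten data for `rep(C_r)` and `rep(Γ_r)` -/

/-- Abstract Auslander–Reiten-theoretic data for the representations of the universal
covering quiver `C_r` and of `Γ_r`: the AR translates, AR components, quasi-simplicity,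
quasi-length, the preprojective/preinjective classes downstairs, cones in a component,
almost split sequences and injectivity of representations of `C_r`. -/
structure CoverAR (k : Type) [Field k] {r : ℕ} (Q : CrQuiver r) where
  /-- The AR translate `τ_{C_r}` of `rep(C_r)`. -/
  tauC : Equiv.Perm (CrRep k Q)
  /-- The AR translate `τ` of `rep(Γ_r)`. -/
  tauK : Equiv.Perm (KRep k r)
  /-- Same AR component in `rep(C_r)`. -/
  sameC : CrRep k Q → CrRep k Q → Prop
  sameC_equiv : Equivalence sameC
  sameC_tau : ∀ M, sameC M (tauC M)
  /-- Same AR component in `rep(Γ_r)`. -/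
  sameK : KRep k r → KRep k r → Prop
  sameK_equiv : Equivalence sameK
  sameK_tau : ∀ M, sameK M (tauK M)
  /-- Quasi-simple in `rep(C_r)`. -/
  qsC : CrRep k Q → Prop
  /-- Quasi-simple in `rep(Γ_r)`. -/
  qsK : KRep k r → Prop
  /-- Quasi-length in `rep(C_r)`. -/
  qlC : CrRep k Q → ℕ
  /-- Preprojective representations of `Γ_r` (the component `𝒫`). -/
  Preproj : KRep k r → Prop
  /-- Preinjective representations of `Γ_r` (the component `ℐ`). -/
  Preinj : KRep k r → Prop
  /-- The cone `(X →)` of successors of `X` in its AR component. -/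
  succConeC : CrRep k Q → Set (CrRep k Q)
  /-- The cone `(→ X)` of predecessors of `X` in its AR component. -/
  predConeC : CrRep k Q → Set (CrRep k Q)
  /-- `ARSeqTriple A B C` : there is an almost split sequence `0 → A → B → C → 0`. -/
  ARSeqTriple : CrRep k Q → CrRep k Q → CrRep k Q → Prop
  /-- `M` is an injective representation of `C_r`. -/
  InjRep : CrRep k Q → Prop

namespace CoverAR

variable {k : Type} [Field k] {r : ℕ} {Q : CrQuiver r}

/-- `M ∈ rep(C_r)` is regular: its push-down `π_λ(M)` is neither preprojective nor
preinjective. -/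
def RegularC (A : CoverAR k Q) (M : CrRep k Q) : Prop :=
  ¬ A.Preproj M.pushdown ∧ ¬ A.Preinj M.pushdown

/-- `N ∈ rep(Γ_r)` is regular. -/
def RegularK (A : CoverAR k Q) (N : KRep k r) : Prop :=
  ¬ A.Preproj N ∧ ¬ A.Preinj N

/-- The regular component `𝒟` of `rep(C_r)` containing `X` has width `W_C(𝒟) = w`:
there are quasi-simple `I_𝒟`, `S_𝒟` in the component of `X` with
`(I_𝒟 →) = Inj ∩ 𝒟` (equivalently: the whole `τ⁻¹`-orbit of `I_𝒟` lies in `Inj`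
while `τ I_𝒟 ∉ Inj`), dually `(→ S_𝒟) = Sur ∩ 𝒟`, and `τ^{w+1} I_𝒟 = S_𝒟`. -/
def IsWidth (A : CoverAR k Q) (X : CrRep k Q) (w : ℕ) : Prop :=
  ∃ I S : CrRep k Q, A.qsC I ∧ A.qsC S ∧ A.sameC X I ∧ A.sameC X S ∧
    (∀ j : ℕ, ((A.tauC⁻¹ ^ j) I).AllInj) ∧ ¬ (A.tauC I).AllInj ∧
    (∀ j : ℕ, ((A.tauC ^ j) S).AllSur) ∧ ¬ (A.tauC⁻¹ S).AllSur ∧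
    (A.tauC ^ (w + 1)) I = S

/-- The regular component of `X ∈ rep(Γ_r)` has width `W(𝒞) = w`
(formulated as in `KroneckerAR.IsWidth`). -/
def IsWidthK (A : CoverAR k Q) (X : KRep k r) (w : ℕ) : Prop :=
  ∃ MC WC : KRep k r, A.qsK MC ∧ A.qsK WC ∧
    A.sameK X MC ∧ A.sameK X WC ∧
    (∀ j : ℕ, ((A.tauK⁻¹ ^ j) MC).EKP) ∧ ¬ (A.tauK MC).EKP ∧
    (∀ j : ℕ, ((A.tauK ^ j) WC).EIP) ∧ ¬ (A.tauK⁻¹ WC).EIP ∧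
    (A.tauK ^ (w + 1)) MC = WC

end CoverAR


/-! ## Auxiliary lemmas for Statement 1 -/

section TreeLemmas

variable {r : ℕ}

lemma BipData.graph_adj_step (Q : BipData r) (x : Q.Src) (i : Fin r) :
    Q.graph.Adj (Sum.inl x) (Sum.inr (Q.step x i)) :=
  Or.inl ⟨x, i, rfl, rfl⟩

lemma BipData.graph_adj_sides {Q : BipData r} {a b : Q.Src ⊕ Q.Snk} (h : Q.graph.Adj a b) :
    a.isLeft = !b.isLeft := by
  rcases h with ⟨x, i, h1, h2⟩ | ⟨x, i, h1, h2⟩ <;> subst h1 <;> subst h2 <;> rfl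

lemma BipData.walk_parity {Q : BipData r} {a b : Q.Src ⊕ Q.Snk} (p : Q.graph.Walk a b) :
    (a.isLeft = b.isLeft) ↔ p.length % 2 = 0 := by
  induction p with
  | nil => simp
  | @cons a c b h q ih =>
    have hs : a.isLeft = !c.isLeft := BipData.graph_adj_sides h
    have hiff : (a.isLeft = b.isLeft) ↔ ¬ (c.isLeft = b.isLeft) := by
      rw [hs]; cases c.isLeft <;> cases b.isLeft <;> simp
    rw [hiff, ih, SimpleGraph.Walk.length_cons]
    omega

lemma BipData.dist_parity {Q : BipData r} (hc : Q.graph.Connected) (z a : Q.Src ⊕ Q.Snk) :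
    (z.isLeft = a.isLeft) ↔ Q.graph.dist z a % 2 = 0 := by
  obtain ⟨p, hp⟩ := hc.exists_walk_length_eq_dist z a
  rw [← hp]
  exact BipData.walk_parity p

lemma dist_le_add_one_of_adj {V : Type} {G : SimpleGraph V} (hc : G.Connected) {z u v : V}
    (h : G.Adj u v) : G.dist z v ≤ G.dist z u + 1 := by
  have h1 : G.dist z v ≤ G.dist z u + G.dist u v := hc.dist_triangle
  have h2 : G.dist u v ≤ 1 := by
    have := SimpleGraph.dist_le (SimpleGraph.Walk.cons h SimpleGraph.Walk.nil)
    simpa using this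
  omega

lemma BipData.dist_succ_of_adj {Q : BipData r} (hT : Q.graph.IsTree)
    {z a b : Q.Src ⊕ Q.Snk} (h : Q.graph.Adj a b) :
    Q.graph.dist z b = Q.graph.dist z a + 1 ∨ Q.graph.dist z a = Q.graph.dist z b + 1 := by
  have hc := hT.isConnected
  have h1 := dist_le_add_one_of_adj (z := z) hc h
  have h2 := dist_le_add_one_of_adj (z := z) hc h.symm
  have hs : a.isLeft = !b.isLeft := BipData.graph_adj_sides h
  have hne : (z.isLeft = a.isLeft) ↔ ¬ (z.isLeft = b.isLeft) := by
    rw [hs]; cases z.isLeft <;> cases b.isLeft <;> simp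
  rw [BipData.dist_parity hc z a, BipData.dist_parity hc z b] at hne
  omega

/-- In a tree, a vertex has at most one neighbour which is closer to a fixed vertex `z`. -/
lemma closer_unique {V : Type} {G : SimpleGraph V} (hT : G.IsTree)
    {z v u w : V} (hu : G.Adj v u) (hw : G.Adj v w)
    (hdu : G.dist z u < G.dist z v) (hdw : G.dist z w < G.dist z v) : u = w := by
  classical
  by_contra hne
  have hc := hT.isConnected
  obtain ⟨pu, hpu⟩ := hc.exists_walk_length_eq_dist u z
  obtain ⟨pw, hpw⟩ := hc.exists_walk_length_eq_dist w z
  have hpuP : pu.IsPath := pu.isPath_of_length_eq_dist hpu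
  have hpwP : pw.IsPath := pw.isPath_of_length_eq_dist hpw
  have hvnu : v ∉ pu.support := by
    intro hv
    have h1 : G.dist v z ≤ (pu.dropUntil v hv).length := SimpleGraph.dist_le _
    have h2 := SimpleGraph.Walk.length_dropUntil_le pu hv
    rw [SimpleGraph.dist_comm (u := v) (v := z)] at h1
    rw [hpu, SimpleGraph.dist_comm (u := u) (v := z)] at h2
    omega
  have hvnw : v ∉ pw.support := by
    intro hv
    have h1 : G.dist v z ≤ (pw.dropUntil v hv).length := SimpleGraph.dist_le _
    have h2 := SimpleGraph.Walk.length_dropUntil_le pw hv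
    rw [SimpleGraph.dist_comm (u := v) (v := z)] at h1
    rw [hpw, SimpleGraph.dist_comm (u := w) (v := z)] at h2
    omega
  have hP1 : (pu.cons hu).IsPath := hpuP.cons hvnu
  have hP2 : (pw.cons hw).IsPath := hpwP.cons hvnw
  have huniq := SimpleGraph.isAcyclic_iff_path_unique.mp hT.2
    (⟨pu.cons hu, hP1⟩ : G.Path v z) (⟨pw.cons hw, hP2⟩ : G.Path v z)
  have hwalks : pu.cons hu = pw.cons hw := congrArg Subtype.val huniq
  have h1 : (pu.cons hu).getVert 1 = u := (SimpleGraph.Walk.getVert_cons_succ pu hu (n := 0)).trans pu.getVert_zero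
  have h2 : (pw.cons hw).getVert 1 = w := (SimpleGraph.Walk.getVert_cons_succ pw hw (n := 0)).trans pw.getVert_zero
  rw [hwalks, h2] at h1
  exact hne h1.symm

/-- The key combinatorial lemma: for any finite nonempty set `F` of sources and nonempty
set `A` of labels, some `x ∈ F` has a "private" sink in direction `i0 ∈ A`. -/
lemma private_sink (Q : CrQuiver r) (F : Finset Q.Src) (hF : F.Nonempty)
    (A : Finset (Fin r)) (hA : A.Nonempty) :
    ∃ x ∈ F, ∃ i0 ∈ A, ∀ i ∈ A, Q.back (Q.step x i0) i ∈ F → i = i0 := by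
  classical
  obtain ⟨ia, hia⟩ := hA
  by_cases htriv : ∀ i ∈ A, i = ia
  · obtain ⟨x, hx⟩ := hF
    exact ⟨x, hx, ia, hia, fun i hi _ => htriv i hi⟩
  push_neg at htriv
  obtain ⟨ib, hib, hibne⟩ := htriv
  have hT : Q.toBipData.graph.IsTree := Q.isTree
  have hc := hT.isConnected
  have hF' := hF
  obtain ⟨x0, hx0⟩ := hF'
  set z : Q.Src ⊕ Q.Snk := Sum.inl x0 with hz
  obtain ⟨xs, hxs, hmax⟩ :=
    F.exists_max_image (fun x => Q.toBipData.graph.dist z (Sum.inl x)) hF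
  set D := Q.toBipData.graph.dist z (Sum.inl xs) with hD
  have hbad : ∀ i j : Fin r,
      Q.toBipData.graph.dist z (Sum.inr (Q.step xs i)) < D →
      Q.toBipData.graph.dist z (Sum.inr (Q.step xs j)) < D → i = j := by
    intro i j hi hj
    have := closer_unique hT (Q.toBipData.graph_adj_step xs i)
      (Q.toBipData.graph_adj_step xs j) hi hj
    exact Q.step_inj xs (Sum.inr.inj this)
  obtain ⟨i0, hi0A, hi0good⟩ :
      ∃ i0 ∈ A, ¬ Q.toBipData.graph.dist z (Sum.inr (Q.step xs i0)) < D := by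
    by_cases h : Q.toBipData.graph.dist z (Sum.inr (Q.step xs ia)) < D
    · exact ⟨ib, hib, fun hcon => hibne (hbad ib ia hcon h)⟩
    · exact ⟨ia, hia, h⟩
  have hyd : Q.toBipData.graph.dist z (Sum.inr (Q.step xs i0)) = D + 1 := by
    rcases Q.toBipData.dist_succ_of_adj (z := z) hT (Q.toBipData.graph_adj_step xs i0) with h | h
    · exact h
    · omega
  refine ⟨xs, hxs, i0, hi0A, ?_⟩
  intro i hiA hiF
  by_contra hne
  have hyx' : Q.step (Q.back (Q.step xs i0) i) i = Q.step xs i0 := Q.step_back _ i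
  have hx'ne : Q.back (Q.step xs i0) i ≠ xs := by
    intro hh
    rw [hh] at hyx'
    exact hne (Q.step_inj xs hyx')
  have hadj' : Q.toBipData.graph.Adj (Sum.inl (Q.back (Q.step xs i0) i))
      (Sum.inr (Q.step xs i0)) := by
    have := Q.toBipData.graph_adj_step (Q.back (Q.step xs i0) i) i
    rwa [hyx'] at this
  have hle := hmax _ hiF
  rcases Q.toBipData.dist_succ_of_adj (z := z) hT hadj' with h | h
  · exact hx'ne (Sum.inl.inj (closer_unique (z := z) hT hadj'.symm
      ((Q.toBipData.graph_adj_step xs i0).symm) (by omega) (by omega)))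
  · omega

end TreeLemmas

section PushMapLemmas

variable {k : Type} [Field k] {r : ℕ} {Q : CrQuiver r}

lemma CrRep.pushMap_apply (M : CrRep k Q) (i : Fin r) (v : ⨁ x, M.Vs x) (x : Q.Src) :
    (M.pushMap i v) (Q.step x i) = M.map x i (v x) := by
  classical
  have hof : ∀ (x' : Q.Src) (u : M.Vs x'), M.pushMap i (DirectSum.of (fun x => M.Vs x) x' u)
      = DirectSum.of (fun y => M.Vt y) (Q.step x' i) (M.map x' i u) := by
    intro x' u
    unfold CrRep.pushMap
    rw [← DirectSum.lof_eq_of k, ← DirectSum.lof_eq_of k, DirectSum.toModule_lof]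
    rfl
  induction v using DirectSum.induction_on with
  | zero => simp
  | of x' u =>
    rw [hof]
    by_cases hx : x' = x
    · subst hx
      rw [DirectSum.of_eq_same, DirectSum.of_eq_same]
    · have hne : Q.step x' i ≠ Q.step x i := by
        intro hh
        apply hx
        have := congrArg (fun yy => Q.back yy i) hh
        simpa only [Q.back_step] using this
      rw [DirectSum.of_eq_of_ne _ _ _ hne.symm, DirectSum.of_eq_of_ne _ _ _ (Ne.symm hx), map_zero]
  | add v w hv hw =>
    rw [map_add, DirectSum.add_apply, DirectSum.add_apply, map_add, hv, hw]

end PushMapLemmas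

/-! ## Statement 1 -/


theorem statement1 {k : Type} [Field k] [IsAlgClosed k] {r : ℕ} (hr : 3 ≤ r)
    (Q : CrQuiver r) (M : CrRep k Q) (hM : M.Indec) :
    List.TFAE [M.pushdown.EKP,
      ∀ i : Fin r, Function.Injective ⇑(M.pushdown.map i),
      M.AllInj] := by
  classical
  have hmapeq : ∀ i : Fin r, M.pushdown.map i = M.pushMap i := fun _ => rfl
  tfae_have 1 → 2 := by
    intro h i
    have h1 : (fun j => if j = i then (1 : k) else 0) ≠ (0 : Fin r → k) := by
      intro hh
      have := congrFun hh i
      simp at this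
    have h2 : (∑ j, (if j = i then (1 : k) else 0) • M.pushdown.map j)
        = M.pushdown.map i := by
      rw [Finset.sum_eq_single i]
      · simp
      · intro j _ hj
        simp [hj]
      · simp
    have := h _ h1
    rwa [h2] at this
  tfae_have 2 → 3 := by
    intro h x i a b hab
    have hof : M.pushMap i (DirectSum.of (fun x => M.Vs x) x (a - b))
        = DirectSum.of (fun y => M.Vt y) (Q.step x i) (M.map x i (a - b)) := by
      unfold CrRep.pushMap
      rw [← DirectSum.lof_eq_of k, ← DirectSum.lof_eq_of k, DirectSum.toModule_lof]
      rfl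
    have hzero : M.map x i (a - b) = 0 := by rw [map_sub, hab, sub_self]
    have h2 : DirectSum.of (fun x => M.Vs x) x (a - b) = 0 := by
      apply h i
      refine Eq.trans ?_ (Eq.trans hof ?_)
      · rfl
      · rw [hzero, map_zero]
        exact (map_zero (M.pushMap i)).symm
    have h4 : a - b = 0 := by
      rw [← DirectSum.of_eq_same (β := fun x => M.Vs x) x (a - b), h2, DirectSum.zero_apply]
    exact sub_eq_zero.mp h4
  tfae_have 3 → 1 := by
    intro h α hα
    have key : ∀ v : ⨁ x, M.Vs x, (∑ i, α i • M.pushdown.map i) v = 0 → v = 0 := by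
      intro v hv
      by_contra hvne
      have hFne : (DFinsupp.support v).Nonempty := by
        rw [Finset.nonempty_iff_ne_empty]
        intro hh
        exact hvne (DFinsupp.support_eq_empty.mp hh)
      have hAne : (Finset.univ.filter (fun i => α i ≠ 0)).Nonempty := by
        obtain ⟨i, hi⟩ := Function.ne_iff.mp hα
        exact ⟨i, by simpa using hi⟩
      obtain ⟨xs, hxs, i0, hi0, hpriv⟩ :=
        private_sink Q (DFinsupp.support v) hFne _ hAne
      have hi0ne : α i0 ≠ 0 := by simpa using hi0
      have hv2 : ∑ i, α i • (M.pushMap i v) = 0 := by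
        refine Eq.trans ?_ hv
        exact (Finset.sum_congr rfl
          (fun i _ => (LinearMap.smul_apply (α i) (M.pushdown.map i) v).symm)).trans
          (LinearMap.sum_apply _ _ _).symm
      have hy : (∑ i, α i • (M.pushMap i v)) (Q.step xs i0) = 0 := by
        rw [hv2, DirectSum.zero_apply]
      rw [DFinsupp.finset_sum_apply] at hy
      have hterm : ∀ i ∈ Finset.univ, i ≠ i0 →
          (α i • M.pushMap i v) (Q.step xs i0) = 0 := by
        intro i _ hne
        by_cases hzero : α i = 0
        · rw [DFinsupp.smul_apply, hzero, zero_smul]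
        · have hiA : i ∈ Finset.univ.filter (fun i => α i ≠ 0) := by simpa using hzero
          have hstep : Q.step (Q.back (Q.step xs i0) i) i = Q.step xs i0 :=
            Q.step_back (Q.step xs i0) i
          have hnotsupp : v (Q.back (Q.step xs i0) i) = 0 := by
            by_contra hns
            exact hne (hpriv i hiA (DFinsupp.mem_support_iff.mpr hns))
          rw [DFinsupp.smul_apply, ← hstep, M.pushMap_apply i v, hnotsupp, map_zero, smul_zero]
      rw [Finset.sum_eq_single_of_mem i0 (Finset.mem_univ i0) hterm] at hy
      rw [DFinsupp.smul_apply, M.pushMap_apply i0 v xs] at hy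
      have hmz : M.map xs i0 (v xs) = 0 := by
        rcases smul_eq_zero.mp hy with hc | hc
        · exact absurd hc hi0ne
        · exact hc
      have hvxs : v xs = 0 :=
        h xs i0 (show M.map xs i0 (v xs) = M.map xs i0 0 by rw [hmz, map_zero])
      exact DFinsupp.mem_support_iff.mp hxs hvxs
    intro a b hab
    have : (∑ i, α i • M.pushdown.map i) (a - b) = 0 := by
      rw [map_sub, hab, sub_self]
    exact sub_eq_zero.mp (key _ this)
  tfae_finish
end

section
/- Let M ∈ rep(C_r) be an indecomposable representation of the universal covering quiver C_r of Γ_r (r ≥ 3) and set N := π_λ(M). Then the following are equivalent: (a) N has the equal images property; (b) N(γ_i) is surjective for all i ∈ {1,…,r}; (c) M ∈ Sur, i.e. M(δ) is surjective for every arrow δ of C_r. -/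
open DirectSum

/-! ## Statement 2 -/


section Aux

open SimpleGraph

lemma no_two_degree {V : Type} {G : SimpleGraph V} (hG : G.IsAcyclic)
    {S : Set V} (hfin : S.Finite) (hne : S.Nonempty)
    (hdeg : ∀ v ∈ S, ∃ w1 w2, w1 ≠ w2 ∧ w1 ∈ S ∧ w2 ∈ S ∧ G.Adj v w1 ∧ G.Adj v w2) :
    False := by
  classical
  set P : Set ℕ := {n | ∃ a b, ∃ p : G.Walk a b, p.IsPath ∧ (∀ v ∈ p.support, v ∈ S) ∧
    p.length = n} with hP
  have hbdd : ∀ n ∈ P, n + 1 ≤ hfin.toFinset.card := by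
    rintro n ⟨a, b, p, hp, hsupp, rfl⟩
    have hnodup := hp.support_nodup
    have : p.support.toFinset ⊆ hfin.toFinset := by
      intro v hv
      simp only [List.mem_toFinset] at hv
      simpa using hsupp v hv
    have hcard := Finset.card_le_card this
    rwa [List.toFinset_card_of_nodup hnodup, SimpleGraph.Walk.length_support] at hcard
  have hPfin : P.Finite := by
    apply Set.Finite.subset (Set.finite_Iic hfin.toFinset.card)
    intro n hn
    exact Nat.le_of_succ_le (hbdd n hn)
  obtain ⟨v0, hv0⟩ := hne
  obtain ⟨w1, w2, hww, hw1S, hw2S, hadj1, hadj2⟩ := hdeg v0 hv0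
  have h1P : 1 ∈ P := by
    refine ⟨v0, w1, SimpleGraph.Walk.cons hadj1 SimpleGraph.Walk.nil, ?_, ?_, rfl⟩
    · exact SimpleGraph.Walk.IsPath.nil.cons (by simp [hadj1.ne])
    · intro v hv
      simp only [SimpleGraph.Walk.support_cons, SimpleGraph.Walk.support_nil,
        List.mem_cons, List.mem_singleton] at hv
      rcases hv with rfl | hv
      · exact hv0
      · simp at hv; subst hv; exact hw1S
  have hPne : hPfin.toFinset.Nonempty := ⟨1, hPfin.mem_toFinset.mpr h1P⟩
  set n := hPfin.toFinset.max' hPne with hn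
  have hnP : n ∈ P := hPfin.mem_toFinset.mp (hPfin.toFinset.max'_mem hPne)
  have hmax : ∀ m ∈ P, m ≤ n := fun m hm =>
    hPfin.toFinset.le_max' m (hPfin.mem_toFinset.mpr hm)
  obtain ⟨a, b, p, hp, hsupp, hlen⟩ := hnP
  have hbS : b ∈ S := hsupp b p.end_mem_support
  obtain ⟨u1, u2, huu, hu1S, hu2S, hadjb1, hadjb2⟩ := hdeg b hbS
  -- each u_i must lie in p.support
  have hmem : ∀ u, u ∈ S → G.Adj b u → u ∈ p.support := by
    intro u huS hadj
    by_contra hu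
    have hu' : u ∉ p.reverse.support := by rwa [SimpleGraph.Walk.support_reverse, List.mem_reverse]
    have hpath : (SimpleGraph.Walk.cons hadj.symm p.reverse).IsPath := hp.reverse.cons hu'
    have : p.length + 1 ∈ P := by
      refine ⟨u, a, SimpleGraph.Walk.cons hadj.symm p.reverse, hpath, ?_, ?_⟩
      · intro v hv
        simp only [SimpleGraph.Walk.support_cons, List.mem_cons] at hv
        rcases hv with rfl | hv
        · exact huS
        · rw [SimpleGraph.Walk.support_reverse, List.mem_reverse] at hv
          exact hsupp v hv
      · simp [SimpleGraph.Walk.length_reverse]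
    have := hmax _ this
    omega
  -- for u in support adjacent to b, u is "second vertex of p.reverse"
  have hsecond : ∀ u (huS : u ∈ S) (hadj : G.Adj b u),
      p.reverse.support.tail.head? = some u := by
    intro u huS hadj
    have hu := hmem u huS hadj
    have hq : (p.dropUntil u hu).IsPath := hp.dropUntil hu
    have he : (SimpleGraph.Walk.cons hadj.symm SimpleGraph.Walk.nil : G.Walk u b).IsPath :=
      SimpleGraph.Walk.IsPath.nil.cons (by simp [hadj.symm.ne])
    have hEq : p.dropUntil u hu = SimpleGraph.Walk.cons hadj.symm SimpleGraph.Walk.nil := by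
      have := isAcyclic_iff_path_unique.mp hG ⟨p.dropUntil u hu, hq⟩
        ⟨SimpleGraph.Walk.cons hadj.symm SimpleGraph.Walk.nil, he⟩
      exact congrArg Subtype.val this
    have hspec := p.take_spec hu
    rw [hEq] at hspec
    have hrev : p.reverse = ((p.takeUntil u hu).append
        (SimpleGraph.Walk.cons hadj.symm SimpleGraph.Walk.nil)).reverse := by rw [hspec]
    rw [SimpleGraph.Walk.reverse_append, SimpleGraph.Walk.reverse_cons,
      SimpleGraph.Walk.reverse_nil] at hrev
    have hrev2 : p.reverse = SimpleGraph.Walk.cons hadj.symm.symm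
        (p.takeUntil u hu).reverse := by
      rw [hrev]; rfl
    rw [hrev2, SimpleGraph.Walk.support_cons]
    rw [SimpleGraph.Walk.support_eq_cons ((p.takeUntil u hu).reverse)]
    rfl
  have h1 := hsecond u1 hu1S hadjb1
  have h2 := hsecond u2 hu2S hadjb2
  rw [h1] at h2
  exact huu (Option.some_injective _ h2)


namespace CrRep

open scoped Classical

variable {k : Type} [Field k] {r : ℕ} {Q : CrQuiver r}

lemma pushMap_lof (M : CrRep k Q) (i : Fin r) (x : Q.Src) (v : M.Vs x) :
    M.pushMap i (DirectSum.lof k Q.Src (fun x => M.Vs x) x v)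
      = DirectSum.lof k Q.Snk (fun y => M.Vt y) (Q.step x i) (M.map x i v) := by
  unfold pushMap
  simp [DirectSum.toModule_lof]

/-- (c) → (b) -/
lemma allSur_pushMap_surj (M : CrRep k Q) (hs : M.AllSur) (i : Fin r) :
    Function.Surjective ⇑(M.pushMap i) := by
  intro w
  induction w using DirectSum.induction_on with
  | zero => exact ⟨0, map_zero _⟩
  | of y wy =>
    obtain ⟨x, hx⟩ : ∃ x, Q.step x i = y := ⟨Q.back y i, Q.step_back y i⟩
    subst hx
    obtain ⟨v, hv⟩ := hs x i wy
    refine ⟨DirectSum.lof k Q.Src (fun x => M.Vs x) x v, ?_⟩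
    rw [M.pushMap_lof, hv, DirectSum.lof_eq_of]
  | add a b ha hb =>
    obtain ⟨a', ha'⟩ := ha
    obtain ⟨b', hb'⟩ := hb
    exact ⟨a' + b', by simp [ha', hb']⟩

/-- (b) → (c) -/
lemma pushMap_surj_allSur (M : CrRep k Q) (h : ∀ i, Function.Surjective ⇑(M.pushMap i)) :
    M.AllSur := by
  intro x i w
  have hL : (DirectSum.component k Q.Snk (fun y => M.Vt y) (Q.step x i)).comp (M.pushMap i)
      = (M.map x i).comp (DirectSum.component k Q.Src (fun x => M.Vs x) x) := by
    refine DirectSum.linearMap_ext k fun x' => ?_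
    ext v
    simp only [LinearMap.coe_comp, Function.comp_apply, M.pushMap_lof]
    by_cases hx : x' = x
    · subst hx
      rw [DirectSum.component.lof_self, DirectSum.component.lof_self]
    · have hst : Q.step x' i ≠ Q.step x i := by
        intro hcon
        exact hx (by rw [← Q.back_step x' i, hcon, Q.back_step])
      simp only [DirectSum.lof_eq_of, ← DirectSum.apply_eq_component]
      rw [DirectSum.of_eq_of_ne _ _ _ hst.symm, DirectSum.of_eq_of_ne _ _ _ (Ne.symm hx), map_zero]
  obtain ⟨u, hu⟩ := h i (DirectSum.lof k Q.Snk (fun y => M.Vt y) (Q.step x i) w)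
  refine ⟨DirectSum.component k Q.Src (fun x => M.Vs x) x u, ?_⟩
  have := congrArg (DirectSum.component k Q.Snk (fun y => M.Vt y) (Q.step x i)) hu
  rw [DirectSum.component.lof_self] at this
  rw [← this]
  exact (LinearMap.congr_fun hL u).symm

/-- (c) → (a) -/
lemma allSur_pushdown_EIP (M : CrRep k Q) (hs : M.AllSur) : M.pushdown.EIP := by
  intro α hα
  rw [← LinearMap.range_eq_top]
  by_contra hne
  obtain ⟨φ, hφne, hφbot⟩ := Submodule.exists_dual_map_eq_bot_of_lt_top
    (lt_top_iff_ne_top.mpr hne) inferInstance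
  set φy : ∀ y : Q.Snk, M.Vt y →ₗ[k] k :=
    fun y => φ.comp (DirectSum.lof k Q.Snk (fun y => M.Vt y) y) with hφy
  have hrel : ∀ (x : Q.Src) (v : M.Vs x),
      ∑ i, α i * φy (Q.step x i) (M.map x i v) = 0 := by
    intro x v
    have hmem : (∑ i, α i • M.pushdown.map i) (DirectSum.lof k Q.Src (fun x => M.Vs x) x v)
        ∈ LinearMap.range (∑ i, α i • M.pushdown.map i) := LinearMap.mem_range_self _ _
    have h0 : φ ((∑ i, α i • M.pushdown.map i)
        (DirectSum.lof k Q.Src (fun x => M.Vs x) x v)) = 0 := by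
      have := hφbot.le (Submodule.mem_map_of_mem hmem)
      exact (Submodule.mem_bot k).1 this
    have h2 : M.pushdown.map = M.pushMap := rfl
    erw [LinearMap.sum_apply] at h0
    have hsa : ∀ (c : k) (f : M.pushdown.V1 →ₗ[k] M.pushdown.V2) (z : M.pushdown.V1),
        (c • f) z = c • f z := fun _ _ _ => rfl
    simp only [h2, hsa, map_sum, map_smul, smul_eq_mul] at h0
    refine Eq.trans (Finset.sum_congr rfl fun i _ => ?_) h0
    show α i * φy (Q.step x i) (M.map x i v)
      = φ (α i • M.pushMap i (DirectSum.lof k Q.Src (fun x => M.Vs x) x v))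
    exact (congrArg (fun t => α i * t) (congrArg φ (M.pushMap_lof i x v)).symm).trans
      (LinearMap.map_smul φ (α i) _).symm
  have hkey : ∀ (x : Q.Src) (i : Fin r), φy (Q.step x i) ≠ 0 → α i ≠ 0 →
      ∃ j, j ≠ i ∧ α j ≠ 0 ∧ φy (Q.step x j) ≠ 0 := by
    intro x i hφi hαi
    by_contra hcon
    push_neg at hcon
    obtain ⟨w, hw⟩ : ∃ w, φy (Q.step x i) w ≠ 0 := by
      by_contra hall
      push_neg at hall
      exact hφi (LinearMap.ext hall)
    obtain ⟨v, hv⟩ := hs x i w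
    have hsum := hrel x v
    rw [Finset.sum_eq_single_of_mem i (Finset.mem_univ i)] at hsum
    · rw [hv] at hsum
      exact mul_ne_zero hαi hw hsum
    · intro j _ hj
      rcases eq_or_ne (α j) 0 with h | h
      · rw [h, zero_mul]
      · have := hcon j hj h
        rw [this]
        simp
  -- the set of sinks with nonzero functional
  set F : Set Q.Snk := {y | φy y ≠ 0} with hF
  have hFne : F.Nonempty := by
    by_contra hFe
    rw [Set.not_nonempty_iff_eq_empty] at hFe
    apply hφne
    refine DirectSum.linearMap_ext k fun y => ?_
    have : y ∉ F := by rw [hFe]; exact Set.notMem_empty y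
    rw [hF, Set.mem_setOf_eq, not_not] at this
    exact this.trans (LinearMap.zero_comp _).symm
  have hFfin : F.Finite := by
    refine (M.finSupp.preimage (Set.injOn_of_injective Sum.inr_injective)).subset ?_
    intro y hy
    obtain ⟨w, hw⟩ : ∃ w, φy y w ≠ 0 := by
      by_contra hall
      push_neg at hall
      exact hy (LinearMap.ext hall)
    exact ⟨w, fun h => hw (by rw [h]; simp)⟩
  set X : Set Q.Src := {x | ∃ y ∈ F, ∃ i : Fin r, α i ≠ 0 ∧ x = Q.back y i} with hX
  have hXfin : X.Finite := by
    have : X ⊆ (fun p : Q.Snk × Fin r => Q.back p.1 p.2) '' (F ×ˢ Set.univ) := by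
      rintro x ⟨y, hy, i, _, rfl⟩
      exact ⟨(y, i), ⟨hy, Set.mem_univ i⟩, rfl⟩
    exact ((hFfin.prod (Set.finite_univ)).image _).subset this
  set S : Set (Q.Src ⊕ Q.Snk) := Sum.inl '' X ∪ Sum.inr '' F with hS
  have hadjr : ∀ (y : Q.Snk) (i : Fin r),
      Q.toBipData.graph.Adj (Sum.inr y) (Sum.inl (Q.back y i)) := by
    intro y i
    exact Or.inr ⟨Q.back y i, i, rfl, by rw [Q.step_back]⟩
  have hadjl : ∀ (x : Q.Src) (i : Fin r),
      Q.toBipData.graph.Adj (Sum.inl x) (Sum.inr (Q.step x i)) := by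
    intro x i
    exact Or.inl ⟨x, i, rfl, rfl⟩
  refine no_two_degree (S := S) Q.isTree.IsAcyclic ((hXfin.image _).union (hFfin.image _))
    ⟨Sum.inr hFne.choose, Or.inr ⟨hFne.choose, hFne.choose_spec, rfl⟩⟩ ?_
  rintro v (⟨x, hx, rfl⟩ | ⟨y, hy, rfl⟩)
  · -- source case
    obtain ⟨y, hyF, i, hαi, rfl⟩ := hx
    have hstep : Q.step (Q.back y i) i = y := Q.step_back y i
    have hφi : φy (Q.step (Q.back y i) i) ≠ 0 := by rw [hstep]; exact hyF
    obtain ⟨j, hji, hαj, hφj⟩ := hkey (Q.back y i) i hφi hαi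
    refine ⟨Sum.inr y, Sum.inr (Q.step (Q.back y i) j), ?_, ?_, ?_, ?_, ?_⟩
    · intro hcon
      apply hji
      apply Q.step_inj (Q.back y i)
      rw [hstep]
      exact (Sum.inr_injective hcon).symm
    · exact Or.inr ⟨y, hyF, rfl⟩
    · exact Or.inr ⟨Q.step (Q.back y i) j, hφj, rfl⟩
    · have := hadjl (Q.back y i) i
      rwa [hstep] at this
    · exact hadjl (Q.back y i) j
  · -- sink case
    obtain ⟨i0, hi0⟩ := Function.ne_iff.mp hα
    have hstep : Q.step (Q.back y i0) i0 = y := Q.step_back y i0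
    have hφi : φy (Q.step (Q.back y i0) i0) ≠ 0 := by rw [hstep]; exact hy
    obtain ⟨j, hji, hαj, _⟩ := hkey (Q.back y i0) i0 hφi hi0
    refine ⟨Sum.inl (Q.back y i0), Sum.inl (Q.back y j), ?_, ?_, ?_, ?_, ?_⟩
    · intro hcon
      exact hji.symm (Q.back_inj y (Sum.inl_injective hcon))
    · exact Or.inl ⟨Q.back y i0, ⟨y, hy, i0, hi0, rfl⟩, rfl⟩
    · exact Or.inl ⟨Q.back y j, ⟨y, hy, j, hαj, rfl⟩, rfl⟩
    · exact hadjr y i0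
    · exact hadjr y j

end CrRep

end Aux

theorem statement2 {k : Type} [Field k] [IsAlgClosed k] {r : ℕ} (hr : 3 ≤ r)
    (Q : CrQuiver r) (M : CrRep k Q) (hM : M.Indec) :
    List.TFAE [M.pushdown.EIP,
      ∀ i : Fin r, Function.Surjective ⇑(M.pushdown.map i),
      M.AllSur] := by
  tfae_have 1 → 2 := by
    intro hEIP i
    have h1 : (Pi.single i (1:k) : Fin r → k) ≠ 0 := by
      intro hcon
      have := congrFun hcon i
      simp at this
    have h2 := hEIP (Pi.single i 1) h1
    have h3 : (∑ j, (Pi.single i (1:k) : Fin r → k) j • M.pushdown.map j) = M.pushdown.map i := by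
      rw [Finset.sum_eq_single_of_mem i (Finset.mem_univ i)]
      · simp
      · intro j _ hj
        rw [Pi.single_eq_of_ne hj, zero_smul]
    rwa [h3] at h2
  tfae_have 2 → 3 := fun h => M.pushMap_surj_allSur h
  tfae_have 3 → 1 := fun h => M.allSur_pushdown_EIP h
  tfae_finish
end

section
/- Let M ∈ rep(C_r) (r ≥ 3) be S_r-stable. Then there is a vertex c ∈ supp(M) such that: (a) σ ∘ g_σ(c) = c for all σ ∈ S_r; (b) for each n ∈ ℕ, the number r divides D(n, c) := Σ_{x ∈ supp(M), d(x,c) = n} dim_k M_x. -/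
open DirectSum

open SimpleGraph

section TreeLemmas

variable {V : Type} [DecidableEq V] {G : SimpleGraph V} (hT : G.IsTree)

/-- The unique path between two vertices of a tree. -/
noncomputable def treePath (u v : V) : G.Walk u v :=
  (hT.existsUnique_path u v).choose

lemma treePath_isPath (u v : V) : (treePath hT u v).IsPath :=
  (hT.existsUnique_path u v).choose_spec.1

lemma treePath_unique {u v : V} (p : G.Walk u v) (hp : p.IsPath) : p = treePath hT u v :=
  (hT.existsUnique_path u v).choose_spec.2 p hp

lemma length_treePath (u v : V) : (treePath hT u v).length = G.dist u v := by
  obtain ⟨p, hp⟩ := hT.isConnected.exists_walk_length_eq_dist u v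
  rw [← treePath_unique hT p (p.isPath_of_length_eq_dist hp)]
  exact hp

lemma treePath_support_subset {u v : V} (p : G.Walk u v) :
    (treePath hT u v).support ⊆ p.support := by
  rw [← treePath_unique hT p.bypass p.bypass_isPath]
  exact p.support_bypass_subset

/-- In a tree, distances add along the unique path. -/
lemma dist_add_of_mem_treePath {u v z : V} (hz : z ∈ (treePath hT u v).support) :
    G.dist u z + G.dist z v = G.dist u v := by
  have h1 : G.dist u z ≤ ((treePath hT u v).takeUntil z hz).length := G.dist_le _
  have h2 : G.dist z v ≤ ((treePath hT u v).dropUntil z hz).length := G.dist_le _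
  have h3 : ((treePath hT u v).takeUntil z hz).length
      + ((treePath hT u v).dropUntil z hz).length = G.dist u v := by
    rw [← length_treePath hT u v]
    conv_rhs => rw [← (treePath hT u v).take_spec hz]
    rw [SimpleGraph.Walk.length_append]
  have h4 := hT.isConnected.dist_triangle (u := u) (v := z) (w := v)
  omega

lemma mem_treePath_of_dist {u v z : V} (h : G.dist u z + G.dist z v = G.dist u v) :
    z ∈ (treePath hT u v).support := by
  have hw : ((treePath hT u z).append (treePath hT z v)).length = G.dist u v := by
    rw [SimpleGraph.Walk.length_append, length_treePath, length_treePath, h]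
  have hp := SimpleGraph.Walk.isPath_of_length_eq_dist _ hw
  rw [← treePath_unique hT _ hp, SimpleGraph.Walk.mem_support_append_iff]
  exact Or.inl (SimpleGraph.Walk.end_mem_support _)

lemma mem_treePath_or {u v z : V} (hz : z ∈ (treePath hT u v).support) (a : V) :
    z ∈ (treePath hT a u).support ∨ z ∈ (treePath hT a v).support := by
  by_contra hcon
  push_neg at hcon
  have hsub := treePath_support_subset hT ((treePath hT a u).reverse.append (treePath hT a v))
  have := hsub hz
  rw [SimpleGraph.Walk.mem_support_append_iff, SimpleGraph.Walk.support_reverse,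
    List.mem_reverse] at this
  exact this.elim hcon.1 hcon.2

end TreeLemmas

set_option linter.unusedSectionVars false
attribute [local instance 0] Classical.propDecidable

section QuiverGraph

variable {r : ℕ} {Q : CrQuiver r}


lemma adj_inl_iff (x : Q.Src) (b : Q.Src ⊕ Q.Snk) :
    Q.toBipData.graph.Adj (Sum.inl x) b ↔ ∃ i, b = Sum.inr (Q.step x i) := by
  constructor
  · rintro (⟨x', i, hx, hb⟩ | ⟨x', i, hx, hb⟩)
    · exact ⟨i, by rw [hb, Sum.inl.inj hx]⟩
    · exact absurd hb (by simp)
  · rintro ⟨i, rfl⟩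
    exact Or.inl ⟨x, i, rfl, rfl⟩

lemma adj_inr_iff (y : Q.Snk) (b : Q.Src ⊕ Q.Snk) :
    Q.toBipData.graph.Adj (Sum.inr y) b ↔ ∃ i, b = Sum.inl (Q.back y i) := by
  constructor
  · rintro (⟨x', i, hx, hb⟩ | ⟨x', i, hx, hb⟩)
    · exact absurd hx (by simp)
    · refine ⟨i, ?_⟩
      have : y = Q.step x' i := Sum.inr.inj hb
      rw [hx, this, Q.back_step]
  · rintro ⟨i, rfl⟩
    exact Or.inr ⟨Q.back y i, i, rfl, by rw [Q.step_back]⟩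

lemma not_adj_inl_inl (x x' : Q.Src) : ¬ Q.toBipData.graph.Adj (Sum.inl x) (Sum.inl x') := by
  rw [adj_inl_iff]; rintro ⟨i, h⟩; simp at h

lemma not_adj_inr_inr (y y' : Q.Snk) : ¬ Q.toBipData.graph.Adj (Sum.inr y) (Sum.inr y') := by
  rw [adj_inr_iff]; rintro ⟨i, h⟩; simp at h

lemma CrPermAut.onV_inl {σ : Equiv.Perm (Fin r)} (φ : CrPermAut Q σ) (x : Q.Src) :
    φ.onV (Sum.inl x) = Sum.inl (φ.es x) := rfl

lemma CrPermAut.onV_inr {σ : Equiv.Perm (Fin r)} (φ : CrPermAut Q σ) (y : Q.Snk) :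
    φ.onV (Sum.inr y) = Sum.inr (φ.et y) := rfl

lemma CrPermAut.adj_onV {σ : Equiv.Perm (Fin r)} (φ : CrPermAut Q σ)
    {a b : Q.Src ⊕ Q.Snk} (h : Q.toBipData.graph.Adj a b) : Q.toBipData.graph.Adj (φ.onV a) (φ.onV b) := by
  rcases h with ⟨x, i, rfl, rfl⟩ | ⟨x, i, rfl, rfl⟩
  · exact Or.inl ⟨φ.es x, σ i, rfl, by rw [CrPermAut.onV_inr, ← φ.comm]⟩
  · exact Or.inr ⟨φ.es x, σ i, rfl, by rw [CrPermAut.onV_inr, ← φ.comm]⟩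

/-- The inverse automorphism, lying over `σ⁻¹`. -/
def CrPermAut.inv {σ : Equiv.Perm (Fin r)} (φ : CrPermAut Q σ) : CrPermAut Q σ⁻¹ where
  es := φ.es.symm
  et := φ.et.symm
  comm := by
    intro x i
    apply φ.et.injective
    rw [Equiv.apply_symm_apply, ← φ.comm]
    simp

lemma CrPermAut.inv_onV {σ : Equiv.Perm (Fin r)} (φ : CrPermAut Q σ) (z : Q.Src ⊕ Q.Snk) :
    φ.inv.onV (φ.onV z) = z := by
  cases z <;> simp [CrPermAut.onV, CrPermAut.inv]

lemma CrPermAut.onV_inv {σ : Equiv.Perm (Fin r)} (φ : CrPermAut Q σ) (z : Q.Src ⊕ Q.Snk) :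
    φ.onV (φ.inv.onV z) = z := by
  cases z <;> simp [CrPermAut.onV, CrPermAut.inv]

lemma CrPermAut.dist_onV {σ : Equiv.Perm (Fin r)} (φ : CrPermAut Q σ)
    (a b : Q.Src ⊕ Q.Snk) : Q.toBipData.graph.dist (φ.onV a) (φ.onV b) = Q.toBipData.graph.dist a b := by
  have key : ∀ (τ : Equiv.Perm (Fin r)) (ψ : CrPermAut Q τ) (a b : Q.Src ⊕ Q.Snk),
      Q.toBipData.graph.dist (ψ.onV a) (ψ.onV b) ≤ Q.toBipData.graph.dist a b := by
    intro τ ψ a b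
    obtain ⟨p, hp⟩ := Q.isTree.isConnected.exists_walk_length_eq_dist a b
    have := Q.toBipData.graph.dist_le (p.map ⟨ψ.onV, fun h => ψ.adj_onV h⟩)
    rwa [SimpleGraph.Walk.length_map, hp] at this
  refine le_antisymm (key σ φ a b) ?_
  have := key σ⁻¹ φ.inv (φ.onV a) (φ.onV b)
  rwa [φ.inv_onV, φ.inv_onV] at this

end QuiverGraph

section RepLemmas

variable {k : Type} [Field k] {r : ℕ} {Q : CrQuiver r}

lemma exists_ne_zero_iff_of_equiv {A B : Type} [AddCommGroup A] [AddCommGroup B]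
    [Module k A] [Module k B] (e : A ≃ₗ[k] B) :
    (∃ v : A, v ≠ 0) ↔ (∃ w : B, w ≠ 0) := by
  constructor
  · rintro ⟨v, hv⟩
    exact ⟨e v, fun h => hv (by simpa using e.injective (by simpa using h))⟩
  · rintro ⟨w, hw⟩
    exact ⟨e.symm w, fun h => hw (by simpa using e.symm.injective (by simpa using h))⟩

variable {M : CrRep k Q}

lemma supp_onV {σ : Equiv.Perm (Fin r)} {φ : CrPermAut Q σ}
    (I : CrIso M (M.twist φ)) (z : Q.Src ⊕ Q.Snk) :
    z ∈ M.suppSet ↔ φ.onV z ∈ M.suppSet := by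
  cases z with
  | inl x =>
    have e : M.Vs x ≃ₗ[k] M.Vs (φ.es x) := I.es x
    exact exists_ne_zero_iff_of_equiv e
  | inr y =>
    have e : M.Vt y ≃ₗ[k] M.Vt (φ.et y) := I.et y
    exact exists_ne_zero_iff_of_equiv e

lemma dimAt_onV {σ : Equiv.Perm (Fin r)} {φ : CrPermAut Q σ}
    (I : CrIso M (M.twist φ)) (z : Q.Src ⊕ Q.Snk) :
    M.dimAt (φ.onV z) = M.dimAt z := by
  cases z with
  | inl x =>
    have e : M.Vs x ≃ₗ[k] M.Vs (φ.es x) := I.es x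
    exact (e.finrank_eq).symm
  | inr y =>
    have e : M.Vt y ≃ₗ[k] M.Vt (φ.et y) := I.et y
    exact (e.finrank_eq).symm

/-- The support of an indecomposable representation is closed under taking paths. -/
lemma supp_path_closed (hM : M.Indec) {a b : Q.Src ⊕ Q.Snk}
    (ha : a ∈ M.suppSet) (hb : b ∈ M.suppSet) {z : Q.Src ⊕ Q.Snk}
    (hz : z ∈ (treePath Q.isTree a b).support) : z ∈ M.suppSet := by
  classical
  by_contra hzS
  have hza : z ≠ a := fun h => hzS (h ▸ ha)
  have hzb : z ≠ b := fun h => hzS (h ▸ hb)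
  set P : Q.Src ⊕ Q.Snk → Prop := fun w => ∃ p : Q.toBipData.graph.Walk a w, z ∉ p.support
    with hP
  have hPa : P a := ⟨SimpleGraph.Walk.nil, by simpa using hza⟩
  have hPadj : ∀ u w, Q.toBipData.graph.Adj u w → w ≠ z → P u → P w := by
    rintro u w h hw ⟨p, hp⟩
    refine ⟨p.concat h, ?_⟩
    rw [SimpleGraph.Walk.support_concat, List.mem_append]
    rintro (h1 | h2)
    · exact hp h1
    · simp at h2; exact hw h2.symm
  -- the idempotent endomorphism
  haveI hdec : DecidablePred P := fun w => Classical.propDecidable _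
  let f : CrHom M M :=
    { fs := fun x => if P (Sum.inl x) then LinearMap.id else 0
      ft := fun y => if P (Sum.inr y) then LinearMap.id else 0
      comm := by
        intro x i
        show (if P (Sum.inr (Q.step x i)) then LinearMap.id else 0) ∘ₗ M.map x i
          = M.map x i ∘ₗ (if P (Sum.inl x) then LinearMap.id else 0)
        by_cases hx : P (Sum.inl x)
        · by_cases hy : P (Sum.inr (Q.step x i))
          · rw [if_pos hx, if_pos hy, LinearMap.id_comp, LinearMap.comp_id]
          · -- hx true, hy false : forces inr (step x i) = z
            have hadj : Q.toBipData.graph.Adj (Sum.inl x) (Sum.inr (Q.step x i)) :=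
              Or.inl ⟨x, i, rfl, rfl⟩
            have hcrit : Sum.inr (Q.step x i) = z := by
              by_contra hne
              exact hy (hPadj _ _ hadj hne hx)
            have hzero : ∀ v : M.Vt (Q.step x i), v = 0 := by
              intro v
              by_contra hv
              exact hzS (hcrit ▸ (⟨v, hv⟩ : ∃ w : M.Vt (Q.step x i), w ≠ 0))
            exact LinearMap.ext fun v => (hzero _).trans (hzero _).symm
        · by_cases hy : P (Sum.inr (Q.step x i))
          · -- hx false, hy true : forces inl x = z
            have hadj : Q.toBipData.graph.Adj (Sum.inr (Q.step x i)) (Sum.inl x) :=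
              Or.inr ⟨x, i, rfl, rfl⟩
            have hcrit : Sum.inl x = z := by
              by_contra hne
              exact hx (hPadj _ _ hadj hne hy)
            have hzero : ∀ v : M.Vs x, v = 0 := by
              intro v
              by_contra hv
              exact hzS (hcrit ▸ (⟨v, hv⟩ : ∃ w : M.Vs x, w ≠ 0))
            refine LinearMap.ext fun v => ?_
            rw [hzero v]
            simp
          · rw [if_neg hx, if_neg hy, LinearMap.zero_comp, LinearMap.comp_zero] }
  have hfs : ∀ x, (f.fs x).comp (f.fs x) = f.fs x := by
    intro x
    show (if P (Sum.inl x) then LinearMap.id else 0).comp _ = _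
    by_cases h : P (Sum.inl x)
    · rw [if_pos h, LinearMap.id_comp]
    · rw [if_neg h, LinearMap.zero_comp]
      exact (if_neg h).symm
  have hft : ∀ y, (f.ft y).comp (f.ft y) = f.ft y := by
    intro y
    show (if P (Sum.inr y) then LinearMap.id else 0).comp _ = _
    by_cases h : P (Sum.inr y)
    · rw [if_pos h, LinearMap.id_comp]
    · rw [if_neg h, LinearMap.zero_comp]
      exact (if_neg h).symm
  rcases hM.2 f hfs hft with hzero | hid
  · -- f is zero, but f = id at a ∈ supp
    cases a with
    | inl xa =>
      obtain ⟨va, hva⟩ := ha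
      have h1 : f.fs xa = 0 := hzero.1 xa
      rw [show f.fs xa = LinearMap.id from if_pos hPa] at h1
      exact hva (by simpa using congrArg (fun g => g va) h1)
    | inr ya =>
      obtain ⟨va, hva⟩ := ha
      have h1 : f.ft ya = 0 := hzero.2 ya
      rw [show f.ft ya = LinearMap.id from if_pos hPa] at h1
      exact hva (by simpa using congrArg (fun g => g va) h1)
  · -- f is the identity, so P b holds, contradicting z on the path a-b
    have hPb : P b := by
      by_contra hPb
      cases b with
      | inl xb =>
        obtain ⟨vb, hvb⟩ := hb
        have h1 : f.fs xb = LinearMap.id := hid.1 xb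
        rw [show f.fs xb = 0 from if_neg hPb] at h1
        exact hvb (by simpa using (congrArg (fun g => g vb) h1).symm)
      | inr yb =>
        obtain ⟨vb, hvb⟩ := hb
        have h1 : f.ft yb = LinearMap.id := hid.2 yb
        rw [show f.ft yb = 0 from if_neg hPb] at h1
        exact hvb (by simpa using (congrArg (fun g => g vb) h1).symm)
    obtain ⟨p, hp⟩ := hPb
    exact hp (treePath_support_subset Q.isTree p hz)

end RepLemmas

section Center

variable {k : Type} [Field k] {r : ℕ} {Q : CrQuiver r} {M : CrRep k Q}

/-- Two minimizers of the eccentricity over the support are equal or adjacent. -/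
lemma ecc_min_adj (hM : M.Indec) {u v : Q.Src ⊕ Q.Snk}
    (hu : u ∈ M.finSupp.toFinset) (hv : v ∈ M.finSupp.toFinset)
    (hmu : ∀ w ∈ M.finSupp.toFinset,
      M.finSupp.toFinset.sup (fun a => Q.toBipData.graph.dist u a)
        ≤ M.finSupp.toFinset.sup (fun a => Q.toBipData.graph.dist w a))
    (hmv : ∀ w ∈ M.finSupp.toFinset,
      M.finSupp.toFinset.sup (fun a => Q.toBipData.graph.dist v a)
        ≤ M.finSupp.toFinset.sup (fun a => Q.toBipData.graph.dist w a)) :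
    u = v ∨ Q.toBipData.graph.Adj u v := by
  classical
  by_cases huv : u = v
  · exact Or.inl huv
  right
  have hconn := Q.isTree.isConnected
  cases htp : treePath Q.isTree u v with
  | nil => exact absurd rfl huv
  | @cons _ w' _ hadj q =>
    have hpath : (SimpleGraph.Walk.cons hadj q).IsPath := htp ▸ treePath_isPath Q.isTree u v
    rw [SimpleGraph.Walk.cons_isPath_iff] at hpath
    by_cases hwv : w' = v
    · exact hwv ▸ hadj
    exfalso
    have hw'mem : w' ∈ (treePath Q.isTree u v).support := by
      rw [htp, SimpleGraph.Walk.support_cons]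
      exact List.mem_cons_of_mem _ q.start_mem_support
    have hw'S : w' ∈ M.finSupp.toFinset := by
      rw [Set.Finite.mem_toFinset]
      exact supp_path_closed hM (M.finSupp.mem_toFinset.mp hu)
        (M.finSupp.mem_toFinset.mp hv) hw'mem
    have hw'u : w' ≠ u := fun h => hpath.2 (h ▸ q.start_mem_support)
    have hd1 : 0 < Q.toBipData.graph.dist w' u := hconn.pos_dist_of_ne hw'u
    have hd2 : 0 < Q.toBipData.graph.dist w' v := hconn.pos_dist_of_ne hwv
    obtain ⟨a, haF, hasup⟩ := M.finSupp.toFinset.exists_mem_eq_sup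
      ⟨u, hu⟩ (fun b => Q.toBipData.graph.dist w' b)
    rcases mem_treePath_or Q.isTree hw'mem a with hcase | hcase
    · have hsplit := dist_add_of_mem_treePath Q.isTree hcase
      have h1 : Q.toBipData.graph.dist u a
          ≤ M.finSupp.toFinset.sup (fun b => Q.toBipData.graph.dist u b) :=
        Finset.le_sup haF
      have h2 := hmu w' hw'S
      rw [hasup] at h2
      have hc1 := SimpleGraph.dist_comm (G := Q.toBipData.graph) (u := a) (v := w')
      have hc2 := SimpleGraph.dist_comm (G := Q.toBipData.graph) (u := a) (v := u)
      omega
    · have hsplit := dist_add_of_mem_treePath Q.isTree hcase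
      have h1 : Q.toBipData.graph.dist v a
          ≤ M.finSupp.toFinset.sup (fun b => Q.toBipData.graph.dist v b) :=
        Finset.le_sup haF
      have h2 := hmv w' hw'S
      rw [hasup] at h2
      have hc1 := SimpleGraph.dist_comm (G := Q.toBipData.graph) (u := a) (v := w')
      have hc2 := SimpleGraph.dist_comm (G := Q.toBipData.graph) (u := a) (v := v)
      omega

end Center

section Divis

variable {k : Type} [Field k] {r : ℕ} {Q : CrQuiver r} {M : CrRep k Q}

lemma divis (hr : 1 ≤ r) (Φ : ∀ σ : Equiv.Perm (Fin r), CrPermAut Q σ)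
    (hΦ : M.SrStable Φ) {c : Q.Src ⊕ Q.Snk}
    (hfix : ∀ σ, (Φ σ).onV c = c)
    (nbr : Fin r → Q.Src ⊕ Q.Snk)
    (hinj : Function.Injective nbr)
    (hadj : ∀ i, Q.toBipData.graph.Adj c (nbr i))
    (hall : ∀ b, Q.toBipData.graph.Adj c b → ∃ i, b = nbr i)
    (hσnbr : ∀ σ i, (Φ σ).onV (nbr i) = nbr (σ i))
    (hnoadj : ∀ i j, ¬ Q.toBipData.graph.Adj (nbr i) (nbr j))
    (n : ℕ) (hn : 1 ≤ n) :
    (r : ℕ) ∣ ∑ᶠ z ∈ {z | z ∈ M.suppSet ∧ Q.toBipData.graph.dist z c = n}, M.dimAt z := by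
  classical
  have hconn := Q.isTree.isConnected
  have hiso : ∀ σ, CrIso M (M.twist (Φ σ)) := fun σ => (hΦ σ).some
  have hsupp : ∀ σ z, z ∈ M.suppSet ↔ (Φ σ).onV z ∈ M.suppSet := fun σ z => supp_onV (hiso σ) z
  have hdim : ∀ σ z, M.dimAt ((Φ σ).onV z) = M.dimAt z := fun σ z => dimAt_onV (hiso σ) z
  have hdist : ∀ σ a b, Q.toBipData.graph.dist ((Φ σ).onV a) ((Φ σ).onV b)
      = Q.toBipData.graph.dist a b := fun σ => (Φ σ).dist_onV
  set T : Finset (Q.Src ⊕ Q.Snk) :=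
    M.finSupp.toFinset.filter (fun z => Q.toBipData.graph.dist z c = n) with hT
  have hset : {z | z ∈ M.suppSet ∧ Q.toBipData.graph.dist z c = n} = (↑T : Set _) := by
    ext z
    simp only [hT, Set.mem_setOf_eq, Finset.coe_filter, Set.Finite.mem_toFinset]
    exact Iff.rfl
  rw [hset, finsum_mem_coe_finset]
  -- existence of branch labels
  have hex : ∀ z ∈ T, ∃ i, Q.toBipData.graph.dist z (nbr i) = n - 1 := by
    intro z hz
    rw [hT, Finset.mem_filter] at hz
    obtain ⟨hzF, hzd⟩ := hz
    cases htp : treePath Q.isTree c z with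
    | nil =>
      rw [SimpleGraph.dist_self] at hzd
      omega
    | @cons _ w' _ hadj' q =>
      obtain ⟨i, hi⟩ := hall w' hadj'
      refine ⟨i, ?_⟩
      have hw'mem : w' ∈ (treePath Q.isTree c z).support := by
        rw [htp, SimpleGraph.Walk.support_cons]
        exact List.mem_cons_of_mem _ q.start_mem_support
      have hsplit := dist_add_of_mem_treePath Q.isTree hw'mem
      have hcz : Q.toBipData.graph.dist c z = n :=
        (SimpleGraph.dist_comm (G := Q.toBipData.graph)).trans hzd
      have hcw : Q.toBipData.graph.dist c w' = 1 :=
        SimpleGraph.dist_eq_one_iff_adj.mpr hadj'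
      have hzw : Q.toBipData.graph.dist z w' = Q.toBipData.graph.dist w' z :=
        SimpleGraph.dist_comm
      rw [← hi]
      omega
  -- uniqueness of branch labels
  have huniq : ∀ z ∈ T, ∀ i j, Q.toBipData.graph.dist z (nbr i) = n - 1 →
      Q.toBipData.graph.dist z (nbr j) = n - 1 → i = j := by
    intro z hz i j hi hj
    by_contra hij
    rw [hT, Finset.mem_filter] at hz
    obtain ⟨hzF, hzd⟩ := hz
    have hne : nbr i ≠ nbr j := fun h => hij (hinj h)
    -- the path between the two neighbours passes through c
    have hw2 : (SimpleGraph.Walk.cons (hadj i).symm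
        (SimpleGraph.Walk.cons (hadj j) SimpleGraph.Walk.nil)).IsPath := by
      rw [SimpleGraph.Walk.cons_isPath_iff, SimpleGraph.Walk.cons_isPath_iff]
      refine ⟨⟨SimpleGraph.Walk.IsPath.nil, by simp [(hadj j).ne]⟩, ?_⟩
      simp only [SimpleGraph.Walk.support_cons, SimpleGraph.Walk.support_nil,
        List.mem_cons, List.mem_singleton]
      push_neg
      exact ⟨(hadj i).ne', hne, by simp⟩
    have hcmem : c ∈ (treePath Q.isTree (nbr i) (nbr j)).support := by
      rw [← treePath_unique Q.isTree _ hw2]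
      simp [SimpleGraph.Walk.support_cons]
    rcases mem_treePath_or Q.isTree hcmem z with hcase | hcase
    · have hsplit := dist_add_of_mem_treePath Q.isTree hcase
      have h1 : Q.toBipData.graph.dist c (nbr i) = 1 :=
        SimpleGraph.dist_eq_one_iff_adj.mpr (hadj i)
      omega
    · have hsplit := dist_add_of_mem_treePath Q.isTree hcase
      have h1 : Q.toBipData.graph.dist c (nbr j) = 1 :=
        SimpleGraph.dist_eq_one_iff_adj.mpr (hadj j)
      omega
  -- the label function
  let i0 : Fin r := ⟨0, hr⟩
  let lab : (Q.Src ⊕ Q.Snk) → Fin r := fun z =>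
    if h : ∃ i, Q.toBipData.graph.dist z (nbr i) = n - 1 then h.choose else i0
  have hlab1 : ∀ z ∈ T, Q.toBipData.graph.dist z (nbr (lab z)) = n - 1 := by
    intro z hz
    have h := hex z hz
    show Q.toBipData.graph.dist z (nbr (dite _ _ _)) = n - 1
    rw [dif_pos h]
    exact h.choose_spec
  have hlab2 : ∀ z ∈ T, ∀ j, Q.toBipData.graph.dist z (nbr j) = n - 1 → lab z = j :=
    fun z hz j hj => huniq z hz _ j (hlab1 z hz) hj
  -- membership transfer under the automorphisms
  have hTmem : ∀ σ z, z ∈ T → (Φ σ).onV z ∈ T := by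
    intro σ z hz
    rw [hT, Finset.mem_filter] at *
    refine ⟨?_, ?_⟩
    · rw [Set.Finite.mem_toFinset]
      exact (hsupp σ z).mp ((Set.Finite.mem_toFinset _).mp hz.1)
    · rw [← hfix σ, hdist σ]
      exact hz.2
  have hlabT : ∀ σ z, z ∈ T → lab ((Φ σ).onV z) = σ (lab z) := by
    intro σ z hz
    apply hlab2 _ (hTmem σ z hz)
    rw [← hσnbr σ (lab z), hdist σ]
    exact hlab1 z hz
  -- all fibers have equal sums
  have hfib : ∀ (σ : Equiv.Perm (Fin r)) (i : Fin r),
      ∑ z ∈ T.filter (fun z => lab z = i), M.dimAt z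
        = ∑ z ∈ T.filter (fun z => lab z = σ i), M.dimAt z := by
    intro σ i
    refine Finset.sum_nbij' (i := fun z => (Φ σ).onV z) (j := fun z => (Φ σ).inv.onV z)
      ?_ ?_ ?_ ?_ ?_
    · intro z hz
      rw [Finset.mem_filter] at *
      exact ⟨hTmem σ z hz.1, by rw [hlabT σ z hz.1, hz.2]⟩
    · intro z hz
      rw [Finset.mem_filter] at *
      obtain ⟨hz1, hz2⟩ := hz
      have h1 : (Φ σ).onV ((Φ σ).inv.onV z) = z := (Φ σ).onV_inv z
      -- membership
      have hzsupp : (Φ σ).inv.onV z ∈ M.finSupp.toFinset := by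
        rw [Set.Finite.mem_toFinset]
        have := (hsupp σ ((Φ σ).inv.onV z))
        rw [h1] at this
        exact this.mpr ((Set.Finite.mem_toFinset _).mp (Finset.mem_filter.mp hz1).1)
      have hzdist : Q.toBipData.graph.dist ((Φ σ).inv.onV z) c = n := by
        have h2 := hdist σ ((Φ σ).inv.onV z) ((Φ σ).inv.onV c)
        have h3 : (Φ σ).inv.onV c = c := by
          have := congrArg (Φ σ).inv.onV (hfix σ)
          rw [(Φ σ).inv_onV] at this
          exact this.symm
        rw [h3, h1] at h2
        rw [hfix σ] at h2
        rw [← h2]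
        exact (Finset.mem_filter.mp hz1).2
      have hmemT : (Φ σ).inv.onV z ∈ T := by
        rw [hT, Finset.mem_filter]
        exact ⟨hzsupp, hzdist⟩
      refine ⟨hmemT, ?_⟩
      have := hlabT σ _ hmemT
      rw [h1, hz2] at this
      exact σ.injective this.symm
    · intro z _; exact (Φ σ).inv_onV z
    · intro z _; exact (Φ σ).onV_inv z
    · intro z _; exact (hdim σ z).symm
  -- put everything together
  have htotal := Finset.sum_fiberwise_of_maps_to
    (fun z (_ : z ∈ T) => Finset.mem_univ (lab z)) (fun z => M.dimAt z)
  rw [← htotal]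
  have hconst : ∀ j : Fin r, ∑ z ∈ T.filter (fun z => lab z = j), M.dimAt z
      = ∑ z ∈ T.filter (fun z => lab z = i0), M.dimAt z := by
    intro j
    have := hfib (Equiv.swap j i0) j
    rwa [Equiv.swap_apply_left] at this
  rw [Finset.sum_congr rfl (fun j _ => hconst j), Finset.sum_const, Finset.card_univ,
    Fintype.card_fin, smul_eq_mul]
  exact Dvd.intro _ rfl

end Divis

theorem statement16' {k : Type} [Field k] [IsAlgClosed k] {r : ℕ} (hr : 3 ≤ r)
    (Q : CrQuiver r) (M : CrRep k Q) (hM : M.Indec)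
    (Φ : ∀ σ : Equiv.Perm (Fin r), CrPermAut Q σ) (hΦ : M.SrStable Φ) :
    ∃ c ∈ M.suppSet,
      (∀ σ : Equiv.Perm (Fin r), (Φ σ).onV c = c) ∧
      (∀ n : ℕ, 1 ≤ n →
        (r : ℕ) ∣ ∑ᶠ z ∈ {z | z ∈ M.suppSet ∧ Q.toBipData.graph.dist z c = n}, M.dimAt z) := by
  classical
  have hiso : ∀ σ, CrIso M (M.twist (Φ σ)) := fun σ => (hΦ σ).some
  have hsupp : ∀ σ z, z ∈ M.suppSet ↔ (Φ σ).onV z ∈ M.suppSet := fun σ z => supp_onV (hiso σ) z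
  have hdist : ∀ σ a b, Q.toBipData.graph.dist ((Φ σ).onV a) ((Φ σ).onV b)
      = Q.toBipData.graph.dist a b := fun σ => (Φ σ).dist_onV
  obtain ⟨z0, hz0⟩ := hM.1
  have hFne : M.finSupp.toFinset.Nonempty := ⟨z0, (Set.Finite.mem_toFinset _).mpr hz0⟩
  obtain ⟨c, hcF, hcmin⟩ := M.finSupp.toFinset.exists_min_image
    (fun v => M.finSupp.toFinset.sup (fun w => Q.toBipData.graph.dist v w)) hFne
  -- the image of the support under each automorphism is the support
  have himg : ∀ σ, M.finSupp.toFinset.image (Φ σ).onV = M.finSupp.toFinset := by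
    intro σ
    apply Finset.eq_of_subset_of_card_le
    · intro w hw
      rw [Finset.mem_image] at hw
      obtain ⟨z, hz, rfl⟩ := hw
      rw [Set.Finite.mem_toFinset]
      exact (hsupp σ z).mp ((Set.Finite.mem_toFinset _).mp hz)
    · rw [Finset.card_image_of_injective _ (Φ σ).onV.injective]
  -- eccentricity is invariant
  have hecc : ∀ σ v, M.finSupp.toFinset.sup (fun w => Q.toBipData.graph.dist ((Φ σ).onV v) w)
      = M.finSupp.toFinset.sup (fun w => Q.toBipData.graph.dist v w) := by
    intro σ v
    conv_lhs => rw [← himg σ]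
    rw [Finset.sup_image]
    exact Finset.sup_congr rfl (fun w _ => hdist σ v w)
  -- the minimizer is fixed by every automorphism
  have hfix : ∀ σ, (Φ σ).onV c = c := by
    intro σ
    have hc' : (Φ σ).onV c ∈ M.finSupp.toFinset := by
      rw [Set.Finite.mem_toFinset]
      exact (hsupp σ c).mp ((Set.Finite.mem_toFinset _).mp hcF)
    have hmin' : ∀ w ∈ M.finSupp.toFinset,
        M.finSupp.toFinset.sup (fun a => Q.toBipData.graph.dist ((Φ σ).onV c) a)
          ≤ M.finSupp.toFinset.sup (fun a => Q.toBipData.graph.dist w a) := by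
      intro w hw
      rw [hecc σ c]
      exact hcmin w hw
    rcases ecc_min_adj hM hc' hcF hmin' hcmin with heq | hadj
    · exact heq
    · exfalso
      cases c with
      | inl x => exact not_adj_inl_inl _ _ hadj
      | inr y => exact not_adj_inr_inr _ _ hadj
  refine ⟨c, (Set.Finite.mem_toFinset _).mp hcF, hfix, ?_⟩
  -- construct the local branch structure at c
  have hnbr : ∃ nbr : Fin r → (Q.Src ⊕ Q.Snk),
      Function.Injective nbr ∧
      (∀ i, Q.toBipData.graph.Adj c (nbr i)) ∧
      (∀ b, Q.toBipData.graph.Adj c b → ∃ i, b = nbr i) ∧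
      (∀ σ i, (Φ σ).onV (nbr i) = nbr (σ i)) ∧
      (∀ i j, ¬ Q.toBipData.graph.Adj (nbr i) (nbr j)) := by
    clear hcmin hcF
    cases c with
    | inl x =>
      have hes : ∀ σ, (Φ σ).es x = x := fun σ => Sum.inl.inj (hfix σ)
      refine ⟨fun i => Sum.inr (Q.step x i), ?_, ?_, ?_, ?_, ?_⟩
      · intro i j h
        exact Q.step_inj x (Sum.inr.inj h)
      · intro i
        exact Or.inl ⟨x, i, rfl, rfl⟩
      · intro b hb
        exact (adj_inl_iff x b).mp hb
      · intro σ i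
        show Sum.inr ((Φ σ).et (Q.step x i)) = Sum.inr (Q.step x (σ i))
        rw [← (Φ σ).comm, hes σ]
      · intro i j
        exact not_adj_inr_inr _ _
    | inr y =>
      have het : ∀ σ, (Φ σ).et y = y := fun σ => Sum.inr.inj (hfix σ)
      refine ⟨fun i => Sum.inl (Q.back y i), ?_, ?_, ?_, ?_, ?_⟩
      · intro i j h
        exact Q.back_inj y (Sum.inl.inj h)
      · intro i
        exact Or.inr ⟨Q.back y i, i, rfl, by rw [Q.step_back]⟩
      · intro b hb
        exact (adj_inr_iff y b).mp hb
      · intro σ i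
        show Sum.inl ((Φ σ).es (Q.back y i)) = Sum.inl (Q.back y (σ i))
        have h1 := (Φ σ).comm (Q.back y i) i
        rw [Q.step_back, het σ] at h1
        have h2 := congrArg (fun t => Q.back t (σ i)) h1
        simp only [Q.back_step] at h2
        rw [h2]
      · intro i j
        exact not_adj_inl_inl _ _
  obtain ⟨nbr, hinj, hadj, hall, hσnbr, hnoadj⟩ := hnbr
  intro n hn
  exact divis (by omega) Φ hΦ hfix nbr hinj hadj hall hσnbr hnoadj n hn

/-! ## Statement 16 -/


theorem statement16 {k : Type} [Field k] [IsAlgClosed k] {r : ℕ} (hr : 3 ≤ r)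
    (Q : CrQuiver r) (M : CrRep k Q) (hM : M.Indec)
    (Φ : ∀ σ : Equiv.Perm (Fin r), CrPermAut Q σ) (hΦ : M.SrStable Φ) :
    ∃ c ∈ M.suppSet,
      (∀ σ : Equiv.Perm (Fin r), (Φ σ).onV c = c) ∧
      (∀ n : ℕ, 1 ≤ n →
        (r : ℕ) ∣ ∑ᶠ z ∈ {z | z ∈ M.suppSet ∧ Q.toBipData.graph.dist z c = n}, M.dimAt z) :=
  statement16' hr Q M hM Φ hΦ
end
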